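/- arXiv:1108.4707 — 8 statements merged into one kernel-verified Lean document; each statement's English description precedes it below -/
import Mathlib

section
/- Let f, g : (0,d) → ℝ be C¹, positive, strictly increasing functions. Suppose there is M > 0 such that x·(log f)'(x) ≤ M for all x ∈ (0,d). If f⁻¹(y) ≍ g⁻¹(y) as y → 0 (i.e., there exist constants 0 < A ≤ B and δ > 0 with A ≤ f⁻¹(y)/g⁻¹(y) ≤ B for y ∈ (0,δ)), then f(x) ≍ g(x) as x → 0. -/
open Set Filter Topology

/-- `F ≍ G` as the variable tends to `0⁺`. -/
def Comparable (F G : ℝ → ℝ) : Prop :=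
  ∃ A B : ℝ, 0 < A ∧ A ≤ B ∧ ∀ᶠ x in 𝓝[>] (0:ℝ), A ≤ F x / G x ∧ F x / G x ≤ B

lemma log_growth_bound {d M : ℝ} {f : ℝ → ℝ} (hf : ContDiffOn ℝ 1 f (Ioo 0 d))
    (hfpos : ∀ x ∈ Ioo 0 d, 0 < f x)
    (hupper : ∀ x ∈ Ioo 0 d, x * deriv f x / f x ≤ M)
    {a b : ℝ} (ha : a ∈ Ioo 0 d) (hb : b ∈ Ioo 0 d) (hab : a ≤ b) :
    Real.log (f b) - Real.log (f a) ≤ M * (Real.log b - Real.log a) := by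
  set φ : ℝ → ℝ := fun x => M * Real.log x - Real.log (f x) with hφ
  have hsub : Icc a b ⊆ Ioo 0 d := fun x hx => ⟨lt_of_lt_of_le ha.1 hx.1, lt_of_le_of_lt hx.2 hb.2⟩
  have hder : ∀ x ∈ Icc a b, HasDerivAt φ (M * x⁻¹ - deriv f x / f x) x := by
    intro x hx
    have hx' : x ∈ Ioo 0 d := hsub hx
    have h1 : HasDerivAt (fun x => M * Real.log x) (M * x⁻¹) x :=
      (Real.hasDerivAt_log (ne_of_gt hx'.1)).const_mul M
    have hdf : DifferentiableAt ℝ f x :=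
      (hf.differentiableOn one_ne_zero).differentiableAt (isOpen_Ioo.mem_nhds hx')
    have h2 : HasDerivAt (fun x => Real.log (f x)) (deriv f x / f x) x := by
      have := (hdf.hasDerivAt).log (ne_of_gt (hfpos x hx'))
      simpa [div_eq_mul_inv] using this
    exact h1.sub h2
  have hmono : MonotoneOn φ (Icc a b) := by
    apply monotoneOn_of_deriv_nonneg (convex_Icc a b)
    · exact fun x hx => (hder x hx).continuousAt.continuousWithinAt
    · intro x hx
      rw [interior_Icc] at hx
      exact ((hder x (Ioo_subset_Icc_self hx)).differentiableAt).differentiableWithinAt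
    · intro x hx
      rw [interior_Icc] at hx
      have hx' : x ∈ Ioo 0 d := hsub (Ioo_subset_Icc_self hx)
      rw [(hder x (Ioo_subset_Icc_self hx)).deriv]
      have h1 := hupper x hx'
      have hx0 : 0 < x := hx'.1
      have hf0 : 0 < f x := hfpos x hx'
      have h2 : x * deriv f x ≤ M * f x := by
        rwa [div_le_iff₀ hf0] at h1
      have h3 : deriv f x / f x ≤ M * x⁻¹ := by
        rw [div_le_iff₀ hf0, mul_comm (M * x⁻¹) (f x), ← mul_assoc]
        calc deriv f x = x⁻¹ * (x * deriv f x) := by field_simp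
          _ ≤ x⁻¹ * (M * f x) := by
              apply mul_le_mul_of_nonneg_left h2 (by positivity)
          _ = f x * M * x⁻¹ := by ring
      linarith
  have := hmono ⟨le_refl a, hab⟩ ⟨hab, le_refl b⟩ hab
  simp only [hφ] at this
  linarith

/-- Lemma (inverse property) i)(a): under the upper power condition,
comparability of the inverses implies comparability of the functions. -/
theorem inverse_property_ia
    (d M : ℝ) (hd : 0 < d) (hM : 0 < M) (f g fi gi : ℝ → ℝ)
    (hf : ContDiffOn ℝ 1 f (Ioo 0 d)) (hg : ContDiffOn ℝ 1 g (Ioo 0 d))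
    (hfpos : ∀ x ∈ Ioo 0 d, 0 < f x) (hgpos : ∀ x ∈ Ioo 0 d, 0 < g x)
    (hfmono : StrictMonoOn f (Ioo 0 d)) (hgmono : StrictMonoOn g (Ioo 0 d))
    (hf0 : Tendsto f (𝓝[>] 0) (𝓝 0)) (hg0 : Tendsto g (𝓝[>] 0) (𝓝 0))
    (hupper : ∀ x ∈ Ioo 0 d, x * deriv f x / f x ≤ M)
    (hfi : ∀ᶠ y in 𝓝[>] (0:ℝ), fi y ∈ Ioo 0 d ∧ f (fi y) = y)
    (hgi : ∀ᶠ y in 𝓝[>] (0:ℝ), gi y ∈ Ioo 0 d ∧ g (gi y) = y)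
    (hcomp : Comparable fi gi) :
    Comparable f g := by
  obtain ⟨A, B, hA, hAB, hev⟩ := hcomp
  set A1 : ℝ := min A 1 with hA1def
  set B1 : ℝ := max B 1 with hB1def
  have hA1pos : 0 < A1 := lt_min hA one_pos
  have hA1le1 : A1 ≤ 1 := min_le_right _ _
  have hB1ge1 : (1:ℝ) ≤ B1 := le_max_right _ _
  have hB1pos : 0 < B1 := lt_of_lt_of_le one_pos hB1ge1
  have hlogA1 : Real.log A1 ≤ 0 := Real.log_nonpos (le_of_lt hA1pos) hA1le1
  have hlogB1 : 0 ≤ Real.log B1 := Real.log_nonneg hB1ge1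
  refine ⟨Real.exp (-(M * Real.log B1)), Real.exp (-(M * Real.log A1)),
    Real.exp_pos _, Real.exp_le_exp.mpr (by nlinarith), ?_⟩
  -- eventual properties in y
  have hev' : ∀ᶠ y in 𝓝[>] (0:ℝ),
      (fi y ∈ Ioo 0 d ∧ f (fi y) = y) ∧ (gi y ∈ Ioo 0 d ∧ g (gi y) = y) ∧
      A1 ≤ fi y / gi y ∧ fi y / gi y ≤ B1 := by
    filter_upwards [hfi, hgi, hev] with y h1 h2 h3
    exact ⟨h1, h2, le_trans (min_le_left _ _) h3.1, le_trans h3.2 (le_max_left _ _)⟩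
  have hxIoo : ∀ᶠ x in 𝓝[>] (0:ℝ), x ∈ Ioo 0 d := Ioo_mem_nhdsGT_of_mem ⟨le_refl 0, hd⟩
  have hgS : Tendsto g (𝓝[>] (0:ℝ)) (𝓝[>] (0:ℝ)) :=
    tendsto_nhdsWithin_of_tendsto_nhds_of_eventually_within g hg0
      (hxIoo.mono fun x hx => hgpos x hx)
  filter_upwards [hxIoo, hgS.eventually hev'] with x hx hP
  obtain ⟨⟨hfiy, hfify⟩, ⟨hgiy, hgify⟩, hlow, hhigh⟩ := hP
  have hgx : 0 < g x := hgpos x hx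
  have hfx : 0 < f x := hfpos x hx
  -- gi (g x) = x
  have hgix : gi (g x) = x := hgmono.injOn hgiy hx hgify
  rw [hgix] at hlow hhigh
  have hx0 : 0 < x := hx.1
  have hfiy0 : 0 < fi (g x) := hfiy.1
  have hlow' : A1 * x ≤ fi (g x) := by
    rw [le_div_iff₀ hx0] at hlow; linarith
  have hhigh' : fi (g x) ≤ B1 * x := by
    rw [div_le_iff₀ hx0] at hhigh; linarith
  constructor
  · -- lower bound: exp(-(M log B1)) ≤ f x / g x
    rcases le_or_gt (fi (g x)) x with hle | hlt
    · have h1 : g x ≤ f x := by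
        calc g x = f (fi (g x)) := hfify.symm
          _ ≤ f x := (hfmono.monotoneOn) hfiy hx hle
      have h2 : Real.exp (-(M * Real.log B1)) ≤ 1 := by
        rw [Real.exp_le_one_iff]; nlinarith
      calc Real.exp (-(M * Real.log B1)) ≤ 1 := h2
        _ ≤ f x / g x := (one_le_div hgx).mpr h1
    · have hkey := log_growth_bound hf hfpos hupper hx hfiy (le_of_lt hlt)
      rw [hfify] at hkey
      have hlog : Real.log (fi (g x)) ≤ Real.log B1 + Real.log x := by
        calc Real.log (fi (g x)) ≤ Real.log (B1 * x) :=
              Real.log_le_log (by positivity) hhigh'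
          _ = Real.log B1 + Real.log x := Real.log_mul (ne_of_gt hB1pos) (ne_of_gt hx0)
      have h1 : Real.log (g x) ≤ Real.log (f x) + M * Real.log B1 := by nlinarith
      have h2 : g x ≤ f x * Real.exp (M * Real.log B1) := by
        calc g x = Real.exp (Real.log (g x)) := (Real.exp_log hgx).symm
          _ ≤ Real.exp (Real.log (f x) + M * Real.log B1) := Real.exp_le_exp.mpr h1
          _ = f x * Real.exp (M * Real.log B1) := by
              rw [Real.exp_add, Real.exp_log hfx]
      rw [le_div_iff₀ hgx]
      calc Real.exp (-(M * Real.log B1)) * g x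
          ≤ Real.exp (-(M * Real.log B1)) * (f x * Real.exp (M * Real.log B1)) := by
            apply mul_le_mul_of_nonneg_left h2 (le_of_lt (Real.exp_pos _))
        _ = f x := by
            rw [mul_comm (f x), ← mul_assoc, ← Real.exp_add]; simp
  · -- upper bound: f x / g x ≤ exp(-(M log A1))
    rcases le_or_gt x (fi (g x)) with hle | hlt
    · have h1 : f x ≤ g x := by
        calc f x ≤ f (fi (g x)) := (hfmono.monotoneOn) hx hfiy hle
          _ = g x := hfify
      have h2 : (1:ℝ) ≤ Real.exp (-(M * Real.log A1)) := by
        rw [Real.one_le_exp_iff]; nlinarith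
      calc f x / g x ≤ 1 := (div_le_one hgx).mpr h1
        _ ≤ Real.exp (-(M * Real.log A1)) := h2
    · have hkey := log_growth_bound hf hfpos hupper hfiy hx (le_of_lt hlt)
      rw [hfify] at hkey
      have hlog : Real.log A1 + Real.log x ≤ Real.log (fi (g x)) := by
        calc Real.log A1 + Real.log x = Real.log (A1 * x) :=
              (Real.log_mul (ne_of_gt hA1pos) (ne_of_gt hx0)).symm
          _ ≤ Real.log (fi (g x)) := Real.log_le_log (by positivity) hlow'
      have h1 : Real.log (f x) ≤ Real.log (g x) + M * (-(Real.log A1)) := by nlinarith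
      have h2 : f x ≤ g x * Real.exp (-(M * Real.log A1)) := by
        calc f x = Real.exp (Real.log (f x)) := (Real.exp_log hfx).symm
          _ ≤ Real.exp (Real.log (g x) + M * (-(Real.log A1))) := Real.exp_le_exp.mpr h1
          _ = g x * Real.exp (-(M * Real.log A1)) := by
              rw [Real.exp_add, Real.exp_log hgx]; ring_nf
      rw [div_le_iff₀ hgx]
      linarith [h2]
end

section
/- Let f, g : (0,d) → ℝ be C¹, positive, strictly increasing functions tending to 0 at 0. Suppose there is M > 0 with x·(log f)'(x) ≤ M on (0,d). If lim_{x→0} f(x)/g(x) = 0, then lim_{y→0} f⁻¹(y)/g⁻¹(y) = +∞; and if lim_{x→0} f(x)/g(x) = +∞, then lim_{y→0} f⁻¹(y)/g⁻¹(y) = 0. -/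
open Set Filter Topology

private lemma ratio_bound (d M : ℝ) (f : ℝ → ℝ)
    (hf : ContDiffOn ℝ 1 f (Ioo 0 d)) (hfpos : ∀ x ∈ Ioo 0 d, 0 < f x)
    (hupper : ∀ x ∈ Ioo 0 d, x * deriv f x / f x ≤ M)
    {a b : ℝ} (ha : a ∈ Ioo 0 d) (hb : b ∈ Ioo 0 d) (hab : a ≤ b) :
    f b ≤ (b / a) ^ M * f a := by
  have hsub : Icc a b ⊆ Ioo 0 d := fun t ht => ⟨lt_of_lt_of_le ha.1 ht.1, lt_of_le_of_lt ht.2 hb.2⟩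
  set h : ℝ → ℝ := fun t => Real.log (f t) - M * Real.log t with hh
  have hder : ∀ t ∈ Ioo (0:ℝ) d, HasDerivAt h (deriv f t / f t - M * t⁻¹) t := by
    intro t ht
    have hdf : DifferentiableAt ℝ f t :=
      (hf.differentiableOn one_ne_zero).differentiableAt (isOpen_Ioo.mem_nhds ht)
    have h1 : HasDerivAt (fun s => Real.log (f s)) (deriv f t / f t) t :=
      hdf.hasDerivAt.log (hfpos t ht).ne'
    have h2 : HasDerivAt (fun s => M * Real.log s) (M * t⁻¹) t :=
      (Real.hasDerivAt_log ht.1.ne').const_mul M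
    exact h1.sub h2
  have hcont : ContinuousOn h (Icc a b) := by
    apply ContinuousOn.sub
    · exact ContinuousOn.log (hf.continuousOn.mono hsub)
        (fun t ht => (hfpos t (hsub ht)).ne')
    · exact continuousOn_const.mul (Real.continuousOn_log.mono
        (fun t ht => (hsub ht).1.ne'))
  have hanti : AntitoneOn h (Icc a b) := by
    apply antitoneOn_of_deriv_nonpos (convex_Icc a b) hcont
    · intro t ht
      rw [interior_Icc] at ht
      exact (hder t (hsub (Ioo_subset_Icc_self ht))).differentiableAt.differentiableWithinAt
    · intro t ht
      rw [interior_Icc] at ht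
      have htd := hsub (Ioo_subset_Icc_self ht)
      have ht0 : (0:ℝ) < t := htd.1
      have hft : 0 < f t := hfpos t htd
      have hut := hupper t htd
      rw [div_le_iff₀ hft] at hut
      rw [(hder t htd).deriv, sub_nonpos, ← div_eq_mul_inv, div_le_div_iff₀ hft ht0]
      nlinarith
  have hba : h b ≤ h a := hanti ⟨le_refl a, hab⟩ ⟨hab, le_refl b⟩ hab
  have ha0 : (0:ℝ) < a := ha.1
  have hb0 : (0:ℝ) < b := hb.1
  have hba0 : 0 < b / a := div_pos hb0 ha0
  have hrpos : 0 < (b / a) ^ M * f a :=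
    mul_pos (Real.rpow_pos_of_pos hba0 M) (hfpos a ha)
  rw [← Real.log_le_log_iff (hfpos b hb) hrpos,
    Real.log_mul (Real.rpow_pos_of_pos hba0 M).ne' (hfpos a ha).ne',
    Real.log_rpow hba0, Real.log_div hb0.ne' ha0.ne']
  simp only [hh] at hba
  linarith

private lemma inv_tendsto (d : ℝ) (hd : 0 < d) (g gi : ℝ → ℝ)
    (hgpos : ∀ x ∈ Ioo 0 d, 0 < g x) (hgmono : StrictMonoOn g (Ioo 0 d))
    (hgi : ∀ᶠ y in 𝓝[>] (0:ℝ), gi y ∈ Ioo 0 d ∧ g (gi y) = y) :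
    Tendsto gi (𝓝[>] 0) (𝓝[>] 0) := by
  apply tendsto_nhdsWithin_of_tendsto_nhds_of_eventually_within
  · rw [tendsto_order]
    constructor
    · intro a ha
      filter_upwards [hgi] with y hy
      exact ha.trans hy.1.1
    · intro a ha
      set δ := min a d / 2 with hδdef
      have hmin : 0 < min a d := lt_min ha hd
      have hδ : δ ∈ Ioo (0:ℝ) d := by
        constructor
        · positivity
        · have : min a d ≤ d := min_le_right _ _
          simp only [hδdef]; linarith
      have hgδ : 0 < g δ := hgpos δ hδ
      have hmem : Ioo (0:ℝ) (g δ) ∈ 𝓝[>] (0:ℝ) :=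
        Ioo_mem_nhdsGT_of_mem ⟨le_refl _, hgδ⟩
      filter_upwards [hgi, hmem] with y hy hyδ
      have hlt : gi y < δ := by
        by_contra hcon
        push_neg at hcon
        have := hgmono.monotoneOn hδ hy.1 hcon
        rw [hy.2] at this
        exact absurd hyδ.2 (not_lt.2 this)
      have hδa : δ ≤ a := by
        have : min a d ≤ a := min_le_left _ _
        simp only [hδdef]; linarith
      linarith
  · filter_upwards [hgi] with y hy
    exact hy.1.1

/-- Lemma (inverse property) i)(b): under the upper power condition on `f`,
`f/g → 0` implies `f⁻¹/g⁻¹ → +∞`, and `f/g → +∞` implies `f⁻¹/g⁻¹ → 0`. -/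
theorem inverse_property_ib
    (d M : ℝ) (hd : 0 < d) (hM : 0 < M) (f g fi gi : ℝ → ℝ)
    (hf : ContDiffOn ℝ 1 f (Ioo 0 d)) (hg : ContDiffOn ℝ 1 g (Ioo 0 d))
    (hfpos : ∀ x ∈ Ioo 0 d, 0 < f x) (hgpos : ∀ x ∈ Ioo 0 d, 0 < g x)
    (hfmono : StrictMonoOn f (Ioo 0 d)) (hgmono : StrictMonoOn g (Ioo 0 d))
    (hf0 : Tendsto f (𝓝[>] 0) (𝓝 0)) (hg0 : Tendsto g (𝓝[>] 0) (𝓝 0))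
    (hupper : ∀ x ∈ Ioo 0 d, x * deriv f x / f x ≤ M)
    (hfi : ∀ᶠ y in 𝓝[>] (0:ℝ), fi y ∈ Ioo 0 d ∧ f (fi y) = y)
    (hgi : ∀ᶠ y in 𝓝[>] (0:ℝ), gi y ∈ Ioo 0 d ∧ g (gi y) = y) :
    (Tendsto (fun x => f x / g x) (𝓝[>] 0) (𝓝 0) →
      Tendsto (fun y => fi y / gi y) (𝓝[>] 0) atTop) ∧
    (Tendsto (fun x => f x / g x) (𝓝[>] 0) atTop →
      Tendsto (fun y => fi y / gi y) (𝓝[>] 0) (𝓝 0)) := by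
  have hgt : Tendsto gi (𝓝[>] 0) (𝓝[>] 0) := inv_tendsto d hd g gi hgpos hgmono hgi
  constructor
  · intro hfg
    rw [tendsto_atTop]
    intro C
    set C' := max C 1 with hC'def
    have hC1 : (1:ℝ) ≤ C' := le_max_right _ _
    have hC0 : (0:ℝ) < C' := zero_lt_one.trans_le hC1
    have hε : (0:ℝ) < C' ^ (-M) := Real.rpow_pos_of_pos hC0 _
    have h1 : ∀ᶠ y in 𝓝[>] (0:ℝ), f (gi y) / g (gi y) < C' ^ (-M) :=
      hgt.eventually (hfg.eventually (eventually_lt_nhds hε))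
    have h2 : ∀ᶠ y in 𝓝[>] (0:ℝ), gi y < d / C' :=
      hgt.eventually ((eventually_lt_nhds (div_pos hd hC0)).filter_mono nhdsWithin_le_nhds)
    filter_upwards [h1, h2, hfi, hgi] with y hy1 hy2 hfiy hgiy
    obtain ⟨hfid, hfy⟩ := hfiy
    obtain ⟨hgid, hgy⟩ := hgiy
    set x := gi y with hxdef
    have hx0 : 0 < x := hgid.1
    have hgx : 0 < g x := hgpos x hgid
    have hCx : C' * x ∈ Ioo (0:ℝ) d := by
      constructor
      · positivity
      · rw [lt_div_iff₀ hC0] at hy2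
        linarith [hy2]
    have key := ratio_bound d M f hf hfpos hupper hgid hCx
      (le_mul_of_one_le_left hx0.le hC1)
    rw [mul_div_assoc, div_self hx0.ne', mul_one] at key
    have hfx : f x < C' ^ (-M) * g x := by
      rw [div_lt_iff₀ hgx] at hy1; exact hy1
    have hchain : f (C' * x) ≤ g x := by
      calc f (C' * x) ≤ C' ^ M * f x := key
        _ ≤ C' ^ M * (C' ^ (-M) * g x) :=
            mul_le_mul_of_nonneg_left hfx.le (Real.rpow_nonneg hC0.le M)
        _ = g x := by
            rw [← mul_assoc, ← Real.rpow_add hC0, add_neg_cancel, Real.rpow_zero, one_mul]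
    have hle : C' * x ≤ fi y := by
      by_contra hcon
      push_neg at hcon
      have := hfmono hfid hCx hcon
      rw [hfy, ← hgy] at this
      exact absurd hchain (not_le.2 this)
    have hfinal : C' ≤ fi y / x := (le_div_iff₀ hx0).2 (by linarith [hle])
    exact le_trans (le_max_left C 1) hfinal
  · intro hfg
    rw [NormedAddCommGroup.tendsto_nhds_zero]
    intro ε hε
    set ε' := min (ε / 2) 1 with hε'def
    have hε'0 : (0:ℝ) < ε' := lt_min (by linarith) one_pos
    have hε'1 : ε' ≤ 1 := min_le_right _ _
    have hε'ε : ε' < ε := lt_of_le_of_lt (min_le_left _ _) (by linarith)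
    have h1 : ∀ᶠ y in 𝓝[>] (0:ℝ), ε' ^ (-M) < f (gi y) / g (gi y) :=
      hgt.eventually (hfg.eventually_gt_atTop (ε' ^ (-M)))
    filter_upwards [h1, hfi, hgi] with y hy1 hfiy hgiy
    obtain ⟨hfid, hfy⟩ := hfiy
    obtain ⟨hgid, hgy⟩ := hgiy
    set x := gi y with hxdef
    have hx0 : 0 < x := hgid.1
    have hgx : 0 < g x := hgpos x hgid
    have hεle : ε' * x ≤ x := by nlinarith
    have hεx : ε' * x ∈ Ioo (0:ℝ) d := by
      constructor
      · positivity
      · exact lt_of_le_of_lt hεle hgid.2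
    have key := ratio_bound d M f hf hfpos hupper hεx hgid hεle
    have hxr : x / (ε' * x) = ε'⁻¹ := by field_simp
    rw [hxr, Real.inv_rpow hε'0.le, ← Real.rpow_neg hε'0.le] at key
    -- key : f x ≤ ε' ^ (-M) * f (ε' * x)
    have h3 : ε' ^ (-M) * g x < f x := (lt_div_iff₀ hgx).1 hy1
    have hPM : (0:ℝ) < ε' ^ M := Real.rpow_pos_of_pos hε'0 M
    have hcancel : ∀ t : ℝ, ε' ^ M * (ε' ^ (-M) * t) = t := by
      intro t
      rw [← mul_assoc, ← Real.rpow_add hε'0, add_neg_cancel, Real.rpow_zero, one_mul]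
    have h4 : ε' ^ M * f x ≤ f (ε' * x) := by
      have := mul_le_mul_of_nonneg_left key hPM.le
      rwa [hcancel] at this
    have h5 : g x < ε' ^ M * f x := by
      have := mul_lt_mul_of_pos_left h3 hPM
      rwa [hcancel] at this
    have hchain : g x < f (ε' * x) := lt_of_lt_of_le h5 h4
    have hlt : fi y < ε' * x := by
      by_contra hcon
      push_neg at hcon
      have := hfmono.monotoneOn hεx hfid hcon
      rw [hfy, ← hgy] at this
      exact absurd hchain (not_lt.2 this)
    have hfpos' : 0 < fi y := hfid.1
    rw [Real.norm_eq_abs, abs_of_pos (div_pos hfpos' hx0), div_lt_iff₀ hx0]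
    nlinarith
end

section
/- Let f, g : (0,d) → ℝ be C¹, positive, strictly increasing functions tending to 0 at 0. Suppose there is m > 0 such that m ≤ x·(log f)'(x) on (0,d). If f(x) ≍ g(x) as x → 0, then f⁻¹(y) ≍ g⁻¹(y) as y → 0. -/
open Set Filter Topology

lemma key_growth (d m : ℝ) (f : ℝ → ℝ)
    (hf : ContDiffOn ℝ 1 f (Ioo 0 d))
    (hfpos : ∀ x ∈ Ioo 0 d, 0 < f x)
    (hlower : ∀ x ∈ Ioo 0 d, m ≤ x * deriv f x / f x)
    {x y : ℝ} (hx : x ∈ Ioo 0 d) (hy : y ∈ Ioo 0 d) (hxy : x ≤ y) :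
    (y / x) ^ m ≤ f y / f x := by
  have hopen : IsOpen (Ioo (0:ℝ) d) := isOpen_Ioo
  have hdiff : DifferentiableOn ℝ f (Ioo 0 d) := hf.differentiableOn one_ne_zero
  set h : ℝ → ℝ := fun z => Real.log (f z) - m * Real.log z with hh
  have hderiv : ∀ z ∈ Ioo (0:ℝ) d, HasDerivAt h (deriv f z / f z - m * z⁻¹) z := by
    intro z hz
    have hz0 : (0:ℝ) < z := hz.1
    have hfz : f z ≠ 0 := (hfpos z hz).ne'
    have hfd : HasDerivAt f (deriv f z) z :=
      ((hdiff z hz).differentiableAt (hopen.mem_nhds hz)).hasDerivAt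
    have h1 : HasDerivAt (fun w => Real.log (f w)) (deriv f z / f z) z := hfd.log hfz
    have h2 : HasDerivAt (fun w => m * Real.log w) (m * z⁻¹) z :=
      (Real.hasDerivAt_log hz0.ne').const_mul m
    exact h1.sub h2
  have hmono : MonotoneOn h (Ioo 0 d) := by
    apply monotoneOn_of_deriv_nonneg (convex_Ioo 0 d)
    · exact fun z hz => ((hderiv z hz).continuousAt).continuousWithinAt
    · intro z hz
      rw [interior_Ioo] at hz
      exact ((hderiv z hz).differentiableAt).differentiableWithinAt
    · intro z hz
      rw [interior_Ioo] at hz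
      rw [(hderiv z hz).deriv]
      have hz0 : (0:ℝ) < z := hz.1
      have hfz : (0:ℝ) < f z := hfpos z hz
      have := hlower z hz
      rw [mul_div_assoc] at this
      have : m / z ≤ deriv f z / f z := by
        rw [div_le_iff₀ hz0] at *
        nlinarith [this]
      have e : m * z⁻¹ = m / z := (div_eq_mul_inv m z).symm
      rw [sub_nonneg, e]
      exact this
  have hhle : h x ≤ h y := hmono hx hy hxy
  have hx0 : (0:ℝ) < x := hx.1
  have hy0 : (0:ℝ) < y := hy.1
  have hfx : (0:ℝ) < f x := hfpos x hx
  have hfy : (0:ℝ) < f y := hfpos y hy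
  have hdivpos : (0:ℝ) < y / x := div_pos hy0 hx0
  rw [Real.rpow_def_of_pos hdivpos, Real.log_div hy0.ne' hx0.ne']
  have : m * (Real.log y - Real.log x) ≤ Real.log (f y) - Real.log (f x) := by
    simp only [hh] at hhle; linarith
  calc Real.exp ((Real.log y - Real.log x) * m) = Real.exp (m * (Real.log y - Real.log x)) := by
        ring_nf
      _ ≤ Real.exp (Real.log (f y) - Real.log (f x)) := Real.exp_le_exp.mpr this
      _ = f y / f x := by rw [Real.exp_sub, Real.exp_log hfy, Real.exp_log hfx]

/-- Lemma (inverse property) ii): under the lower power condition on `f`,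
comparability of the functions implies comparability of the inverses. -/
theorem inverse_property_ii
    (d m : ℝ) (hd : 0 < d) (hm : 0 < m) (f g fi gi : ℝ → ℝ)
    (hf : ContDiffOn ℝ 1 f (Ioo 0 d)) (hg : ContDiffOn ℝ 1 g (Ioo 0 d))
    (hfpos : ∀ x ∈ Ioo 0 d, 0 < f x) (hgpos : ∀ x ∈ Ioo 0 d, 0 < g x)
    (hfmono : StrictMonoOn f (Ioo 0 d)) (hgmono : StrictMonoOn g (Ioo 0 d))
    (hf0 : Tendsto f (𝓝[>] 0) (𝓝 0)) (hg0 : Tendsto g (𝓝[>] 0) (𝓝 0))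
    (hlower : ∀ x ∈ Ioo 0 d, m ≤ x * deriv f x / f x)
    (hfi : ∀ᶠ y in 𝓝[>] (0:ℝ), fi y ∈ Ioo 0 d ∧ f (fi y) = y)
    (hgi : ∀ᶠ y in 𝓝[>] (0:ℝ), gi y ∈ Ioo 0 d ∧ g (gi y) = y)
    (hcomp : Comparable f g) :
    Comparable fi gi := by
  obtain ⟨A, B, hA, hAB, hev⟩ := hcomp
  -- normalize constants so that A₀ ≤ 1 ≤ B₀
  set A₀ := min A 1 with hA₀def
  set B₀ := max B 1 with hB₀def
  have hA₀ : 0 < A₀ := lt_min hA one_pos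
  have hA₀1 : A₀ ≤ 1 := min_le_right _ _
  have hB₀1 : (1:ℝ) ≤ B₀ := le_max_right _ _
  have hB₀ : 0 < B₀ := lt_of_lt_of_le one_pos hB₀1
  have hev' : ∀ᶠ x in 𝓝[>] (0:ℝ), A₀ ≤ f x / g x ∧ f x / g x ≤ B₀ := by
    filter_upwards [hev] with x hx
    exact ⟨le_trans (min_le_left _ _) hx.1, le_trans hx.2 (le_max_left _ _)⟩
  -- get δ from the eventual comparison
  obtain ⟨δ', hδ'mem, hδ'⟩ := mem_nhdsGT_iff_exists_Ioo_subset.mp hev'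
  have hδ'0 : (0:ℝ) < δ' := hδ'mem
  -- gi tends to 0 from the right
  have hgi0 : ∀ ε : ℝ, 0 < ε → ∀ᶠ y in 𝓝[>] (0:ℝ), gi y < ε := by
    intro ε hε
    set ε' := min ε (d/2) with hε'def
    have hε' : ε' ∈ Ioo (0:ℝ) d := ⟨lt_min hε (by linarith), lt_of_le_of_lt (min_le_right _ _) (by linarith)⟩
    have hgε' : 0 < g ε' := hgpos ε' hε'
    have hIoo : Ioo (0:ℝ) (g ε') ∈ 𝓝[>] (0:ℝ) := Ioo_mem_nhdsGT_of_mem ⟨le_refl 0, hgε'⟩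
    filter_upwards [hgi, eventually_mem_set.mpr hIoo] with y hy hymem
    by_contra hcon
    push_neg at hcon
    have hεle : ε' ≤ gi y := le_trans (min_le_left _ _) hcon
    have : g ε' ≤ g (gi y) := hgmono.monotoneOn hε' hy.1 hεle
    rw [hy.2] at this
    exact absurd hymem.2 (not_lt.mpr this)
  -- the candidate constants
  refine ⟨B₀ ^ (-(1/m)), A₀ ^ (-(1/m)), Real.rpow_pos_of_pos hB₀ _, ?_, ?_⟩
  · have h1 : B₀ ^ (-(1/m)) ≤ 1 :=
      Real.rpow_le_one_of_one_le_of_nonpos hB₀1 (by positivity |> neg_nonpos_of_nonneg)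
    have h2 : (1:ℝ) ≤ A₀ ^ (-(1/m)) :=
      Real.one_le_rpow_of_pos_of_le_one_of_nonpos hA₀ hA₀1 (by positivity |> neg_nonpos_of_nonneg)
    linarith
  · filter_upwards [hfi, hgi, hgi0 (min δ' d) (lt_min hδ'0 hd), self_mem_nhdsWithin]
      with y hfy hgy hlt hy0
    have hy0' : (0:ℝ) < y := hy0
    obtain ⟨hx1mem, hx1⟩ := hfy
    obtain ⟨hx2mem, hx2⟩ := hgy
    set x1 := fi y
    set x2 := gi y
    have hx10 : (0:ℝ) < x1 := hx1mem.1
    have hx20 : (0:ℝ) < x2 := hx2mem.1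
    have hx2δ : x2 ∈ Ioo (0:ℝ) δ' := ⟨hx20, lt_of_lt_of_le hlt (min_le_left _ _)⟩
    have hcompx2 := hδ' hx2δ
    simp only [Set.mem_setOf_eq] at hcompx2
    rw [hx2] at hcompx2
    have hfx2pos : 0 < f x2 := hfpos x2 hx2mem
    -- case split
    rcases le_total x1 x2 with hle | hle
    · -- x1 ≤ x2 : upper bound on (x2/x1)^m
      have hkey := key_growth d m f hf hfpos hlower hx1mem hx2mem hle
      rw [hx1] at hkey
      have hub : (x2 / x1) ^ m ≤ B₀ := le_trans hkey hcompx2.2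
      have hratio : (0:ℝ) < x2 / x1 := div_pos hx20 hx10
      have h1m : (0:ℝ) < 1/m := by positivity
      have : ((x2 / x1) ^ m) ^ (1/m) ≤ B₀ ^ (1/m) :=
        Real.rpow_le_rpow (Real.rpow_nonneg hratio.le m) hub h1m.le
      rw [← Real.rpow_mul hratio.le, mul_one_div_cancel hm.ne', Real.rpow_one] at this
      constructor
      · rw [Real.rpow_neg hB₀.le]
        calc (B₀ ^ (1/m))⁻¹ ≤ (x2 / x1)⁻¹ := by
              apply inv_anti₀ hratio this
            _ = x1 / x2 := by rw [inv_div]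
      · have h1 : x1 / x2 ≤ 1 := (div_le_one hx20).mpr hle
        have h2 : (1:ℝ) ≤ A₀ ^ (-(1/m)) :=
          Real.one_le_rpow_of_pos_of_le_one_of_nonpos hA₀ hA₀1
            (neg_nonpos_of_nonneg (by positivity))
        linarith
    · -- x2 ≤ x1
      have hkey := key_growth d m f hf hfpos hlower hx2mem hx1mem hle
      rw [hx1] at hkey
      have hfx2lb : A₀ * y ≤ f x2 := by
        have := hcompx2.1
        rw [le_div_iff₀ hy0'] at this
        linarith
      have hub : (x1 / x2) ^ m ≤ A₀⁻¹ := by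
        refine le_trans hkey ?_
        rw [div_le_iff₀ hfx2pos]
        calc y = A₀⁻¹ * (A₀ * y) := by field_simp
          _ ≤ A₀⁻¹ * f x2 := by
              apply mul_le_mul_of_nonneg_left hfx2lb (inv_nonneg.mpr hA₀.le)
      have hratio : (0:ℝ) < x1 / x2 := div_pos hx10 hx20
      have h1m : (0:ℝ) < 1/m := by positivity
      have hthis : ((x1 / x2) ^ m) ^ (1/m) ≤ (A₀⁻¹) ^ (1/m) :=
        Real.rpow_le_rpow (Real.rpow_nonneg hratio.le m) hub h1m.le
      rw [← Real.rpow_mul hratio.le, mul_one_div_cancel hm.ne', Real.rpow_one,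
        Real.inv_rpow hA₀.le, ← Real.rpow_neg hA₀.le] at hthis
      constructor
      · have h1 : (1:ℝ) ≤ x1 / x2 := (one_le_div hx20).mpr hle
        have h2 : B₀ ^ (-(1/m)) ≤ 1 :=
          Real.rpow_le_one_of_one_le_of_nonpos hB₀1 (neg_nonpos_of_nonneg (by positivity))
        linarith
      · exact hthis
end

section
/- The functions f(x) = e^{-1/(2x)} and g(x) = e^{-1/x} on (0,1) satisfy lim_{x→0} f(x)/g(x) = +∞, yet their inverses f⁻¹(y) = -1/(2·log y) and g⁻¹(y) = -1/log y are comparable: f⁻¹(y)/g⁻¹(y) = 1/2 for all y ∈ (0,1). Hence the conclusion of the inverse property fails without the upper power condition. -/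
open Set Filter Topology

/-- Counterexample showing the upper power condition is necessary in the inverse property:
`f(x) = e^{-1/(2x)}` and `g(x) = e^{-1/x}` satisfy `f/g → +∞` as `x → 0⁺`, yet their
inverses `f⁻¹(y) = -1/(2 log y)` and `g⁻¹(y) = -1/log y` have constant ratio `1/2`. -/
theorem flat_counterexample :
    let f : ℝ → ℝ := fun x => Real.exp (-1 / (2 * x))
    let g : ℝ → ℝ := fun x => Real.exp (-1 / x)
    Tendsto (fun x => f x / g x) (𝓝[>] 0) atTop ∧
    (∀ y ∈ Ioo (0:ℝ) 1, f (-1 / (2 * Real.log y)) = y) ∧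
    (∀ y ∈ Ioo (0:ℝ) 1, g (-1 / Real.log y) = y) ∧
    (∀ y ∈ Ioo (0:ℝ) 1, (-1 / (2 * Real.log y)) / (-1 / Real.log y) = 1 / 2) := by
  intro f g
  refine ⟨?_, ?_, ?_, ?_⟩
  · have h1 : Tendsto (fun x : ℝ => 1 / (2 * x)) (𝓝[>] 0) atTop := by
      have := tendsto_inv_nhdsGT_zero (𝕜 := ℝ)
      have h2 : Tendsto (fun x : ℝ => x⁻¹ / 2) (𝓝[>] 0) atTop :=
        this.atTop_div_const two_pos
      refine h2.congr fun x => by field_simp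
    have : Tendsto (fun x : ℝ => Real.exp (1 / (2 * x))) (𝓝[>] 0) atTop :=
      Real.tendsto_exp_atTop.comp h1
    refine this.congr' ?_
    filter_upwards [self_mem_nhdsWithin] with x (hx : 0 < x)
    simp only [f, g, ← Real.exp_sub]
    congr 1
    field_simp
    ring
  · intro y hy
    have hlog : Real.log y < 0 := Real.log_neg hy.1 hy.2
    simp only [f]
    rw [show -1 / (2 * (-1 / (2 * Real.log y))) = Real.log y by field_simp]
    exact Real.exp_log hy.1
  · intro y hy
    have hlog : Real.log y < 0 := Real.log_neg hy.1 hy.2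
    simp only [g]
    rw [show -1 / (-1 / Real.log y) = Real.log y by field_simp]
    exact Real.exp_log hy.1
  · intro y hy
    have hlog : Real.log y < 0 := Real.log_neg hy.1 hy.2
    field_simp
    exact div_self hlog.ne
end

section
/- Let g(x) = kx with 0 < k < 1, let x₀ > 0 and let S = {k^n x₀ : n ∈ ℕ} be the orbit of x₀ under g. Then the length |A_ε(S)| of the ε-neighborhood of S satisfies |A_ε(S)| ≍ ε·(-log ε) as ε → 0, i.e., there exist constants 0 < A ≤ B and ε₀ > 0 with A ≤ |A_ε(S)|/(ε·(-log ε)) ≤ B for 0 < ε < ε₀. -/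
open Set Filter Topology MeasureTheory

set_option maxHeartbeats 1000000

/-- The length of the `ε`-neighborhood of a set `U ⊆ ℝ`. -/
noncomputable def nbdLength (U : Set ℝ) (ε : ℝ) : ℝ :=
  (volume (Metric.cthickening ε U)).toReal

/-- For the linear map `g(x) = kx`, `0 < k < 1`, the length of the `ε`-neighborhood
of the orbit `S = {kⁿ x₀}` satisfies `|A_ε(S)| ≍ ε·(-log ε)` as `ε → 0`. -/
theorem eps_neighborhood_linear_orbit
    (k x₀ : ℝ) (hk : k ∈ Ioo (0:ℝ) 1) (hx₀ : 0 < x₀) :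
    ∃ A B ε₀ : ℝ, 0 < A ∧ A ≤ B ∧ 0 < ε₀ ∧
      ∀ ε ∈ Ioo 0 ε₀,
        A ≤ nbdLength {y : ℝ | ∃ n : ℕ, y = k ^ n * x₀} ε / (ε * (-Real.log ε)) ∧
        nbdLength {y : ℝ | ∃ n : ℕ, y = k ^ n * x₀} ε / (ε * (-Real.log ε)) ≤ B := by
  obtain ⟨hk0, hk1⟩ := hk
  set S : Set ℝ := {y : ℝ | ∃ n : ℕ, y = k ^ n * x₀} with hS
  set T : Set ℝ := insert 0 (Set.range fun n : ℕ => k ^ n * x₀) with hT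
  have hST : S ⊆ T := by
    rintro y ⟨n, rfl⟩; exact Or.inr ⟨n, rfl⟩
  have hTcpt : IsCompact T := by
    have h0 : Tendsto (fun n : ℕ => k ^ n * x₀) atTop (𝓝 0) := by
      simpa using (tendsto_pow_atTop_nhds_zero_of_lt_one hk0.le hk1).mul_const x₀
    exact h0.isCompact_insert_range
  set L : ℝ := -Real.log k with hLdef
  have hL : 0 < L := by
    have := Real.log_neg hk0 hk1; linarith
  set C : ℝ := 3 / (x₀ * (1 - k)) with hCdef
  have hC : 0 < C := by
    apply div_pos (by norm_num); nlinarith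
  set R : ℝ := 2 * (|Real.log C| + L + 1) with hRdef
  refine ⟨1 / L, x₀ + 4 + 2 / L, Real.exp (-R), by positivity, ?_, Real.exp_pos _, ?_⟩
  · have h1 : 1 / L ≤ 2 / L := by gcongr <;> norm_num
    linarith
  intro ε hε
  obtain ⟨hε0, hεlt⟩ := hε
  -- basic facts about -log ε
  have hlogR : R ≤ -Real.log ε := by
    have := Real.log_lt_log hε0 hεlt
    rw [Real.log_exp] at this; linarith
  have habsC : Real.log C ≤ |Real.log C| := le_abs_self _
  have habsC' : -|Real.log C| ≤ Real.log C := neg_abs_le _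
  have hlog1 : 1 ≤ -Real.log ε := by
    have h0 : (0:ℝ) ≤ |Real.log C| := abs_nonneg _
    rw [hRdef] at hlogR; linarith
  have hlogpos : 0 < -Real.log ε := by linarith
  have hdenpos : 0 < ε * (-Real.log ε) := mul_pos hε0 hlogpos
  -- finiteness of the measure
  have hcthick_sub : Metric.cthickening ε S ⊆ Metric.cthickening ε T :=
    Metric.cthickening_subset_of_subset ε hST
  have hfin : volume (Metric.cthickening ε S) ≠ ⊤ := by
    refine (measure_mono hcthick_sub).trans_lt ?_ |>.ne
    exact (hTcpt.cthickening).measure_lt_top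
  ----------------------------------------------------------------
  -- LOWER BOUND
  ----------------------------------------------------------------
  have lower : 1 / L ≤ nbdLength S ε / (ε * (-Real.log ε)) := by
    set M : ℕ := ⌊(-Real.log ε - Real.log C) / L⌋₊ with hMdef
    have harg0 : 0 ≤ (-Real.log ε - Real.log C) / L := by
      apply div_nonneg ?_ hL.le
      rw [hRdef] at hlogR; linarith
    have hMle : (M : ℝ) * L ≤ -Real.log ε - Real.log C := by
      have := Nat.floor_le harg0
      calc (M:ℝ) * L ≤ ((-Real.log ε - Real.log C) / L) * L := by
            apply mul_le_mul_of_nonneg_right this hL.le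
        _ = -Real.log ε - Real.log C := by field_simp
    have hMlt : -Real.log ε - Real.log C < ((M : ℝ) + 1) * L := by
      have h := Nat.lt_floor_add_one ((-Real.log ε - Real.log C) / L)
      calc -Real.log ε - Real.log C = ((-Real.log ε - Real.log C) / L) * L := by field_simp
        _ < ((M:ℝ) + 1) * L := by
            apply mul_lt_mul_of_pos_right ?_ hL
            exact_mod_cast h
    have hkM : C * ε ≤ k ^ M := by
      rw [← Real.log_le_log_iff (by positivity) (by positivity), Real.log_mul hC.ne' hε0.ne',
        Real.log_pow]
      rw [hLdef] at hMle; linarith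
    have h3ε : 3 * ε ≤ k ^ M * x₀ * (1 - k) := by
      have h1 : C * ε * (x₀ * (1 - k)) ≤ k ^ M * (x₀ * (1 - k)) := by
        apply mul_le_mul_of_nonneg_right hkM; nlinarith
      have h2 : C * (x₀ * (1 - k)) = 3 := by
        rw [hCdef, div_mul_cancel₀]
        exact ne_of_gt (by nlinarith)
      nlinarith
    have hM2 : -Real.log ε ≤ 2 * L * M := by
      rw [hRdef] at hlogR; nlinarith
    -- disjoint intervals inside the thickening
    have hsub : ∀ n, Set.Icc (k ^ n * x₀ - ε) (k ^ n * x₀ + ε) ⊆ Metric.cthickening ε S := by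
      intro n
      rw [← Real.closedBall_eq_Icc]
      exact Metric.closedBall_subset_cthickening (show k ^ n * x₀ ∈ S from ⟨n, rfl⟩) ε
    have hdisj : (↑(Finset.range (M + 1)) : Set ℕ).PairwiseDisjoint
        (fun n => Set.Icc (k ^ n * x₀ - ε) (k ^ n * x₀ + ε)) := by
      have key : ∀ n m, n < m → m ≤ M →
          Disjoint (Set.Icc (k ^ n * x₀ - ε) (k ^ n * x₀ + ε))
            (Set.Icc (k ^ m * x₀ - ε) (k ^ m * x₀ + ε)) := by
        intro n m hnm hmM
        have h1 : k ^ (m - 1) ≤ k ^ n := pow_le_pow_of_le_one hk0.le hk1.le (by omega)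
        have h2 : k ^ M ≤ k ^ (m - 1) := pow_le_pow_of_le_one hk0.le hk1.le (by omega)
        have h3 : k ^ m = k ^ (m - 1) * k := by
          rw [← pow_succ]; congr 1; omega
        have h4 : k ^ n * x₀ - k ^ m * x₀ ≥ k ^ M * x₀ * (1 - k) := by
          rw [h3]
          nlinarith [mul_le_mul_of_nonneg_right h1 hx₀.le,
            mul_le_mul_of_nonneg_right h2 (mul_nonneg hx₀.le (by linarith : (0:ℝ) ≤ 1 - k))]
        have hgap : k ^ m * x₀ + ε < k ^ n * x₀ - ε := by linarith
        rw [Set.disjoint_right]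
        intro x hx hx'
        simp only [Set.mem_Icc] at hx hx'
        linarith [hx.1, hx'.2]
      intro n hn m hm hnm
      simp only [Finset.coe_range, Set.mem_Iio] at hn hm
      rcases lt_or_gt_of_ne hnm with h | h
      · exact key n m h (by omega)
      · exact (key m n h (by omega)).symm
    have hvol : ENNReal.ofReal ((M + 1) * (2 * ε)) ≤ volume (Metric.cthickening ε S) := by
      have h1 : volume (⋃ n ∈ Finset.range (M + 1),
          Set.Icc (k ^ n * x₀ - ε) (k ^ n * x₀ + ε)) =
          ∑ n ∈ Finset.range (M + 1), volume (Set.Icc (k ^ n * x₀ - ε) (k ^ n * x₀ + ε)) :=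
        measure_biUnion_finset hdisj fun n _ => measurableSet_Icc
      have h2 : ∀ n, volume (Set.Icc (k ^ n * x₀ - ε) (k ^ n * x₀ + ε))
          = ENNReal.ofReal (2 * ε) := by
        intro n; rw [Real.volume_Icc]; ring_nf
      calc ENNReal.ofReal ((M + 1) * (2 * ε))
          = ∑ n ∈ Finset.range (M + 1), ENNReal.ofReal (2 * ε) := by
            rw [Finset.sum_const, Finset.card_range, nsmul_eq_mul,
              ← ENNReal.ofReal_natCast, ← ENNReal.ofReal_mul (by positivity)]
            norm_num
        _ = volume (⋃ n ∈ Finset.range (M + 1),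
              Set.Icc (k ^ n * x₀ - ε) (k ^ n * x₀ + ε)) := by
            rw [h1]; exact Finset.sum_congr rfl fun n _ => (h2 n).symm
        _ ≤ volume (Metric.cthickening ε S) := by
            apply measure_mono
            exact Set.iUnion₂_subset fun n _ => hsub n
    have hlen : (M + 1) * (2 * ε) ≤ nbdLength S ε := by
      rw [nbdLength]
      calc (M + 1) * (2 * ε) = (ENNReal.ofReal ((M + 1) * (2 * ε))).toReal := by
            rw [ENNReal.toReal_ofReal (by positivity)]
        _ ≤ (volume (Metric.cthickening ε S)).toReal := ENNReal.toReal_mono hfin hvol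
    rw [le_div_iff₀ hdenpos]
    calc 1 / L * (ε * (-Real.log ε)) ≤ 1 / L * (ε * (2 * L * M)) := by
          apply mul_le_mul_of_nonneg_left ?_ (by positivity)
          exact mul_le_mul_of_nonneg_left hM2 hε0.le
      _ = 2 * ε * M := by field_simp
      _ ≤ (M + 1) * (2 * ε) := by nlinarith
      _ ≤ nbdLength S ε := hlen
  ----------------------------------------------------------------
  -- UPPER BOUND
  ----------------------------------------------------------------
  have upper : nbdLength S ε / (ε * (-Real.log ε)) ≤ x₀ + 4 + 2 / L := by
    set N : ℕ := ⌈(-Real.log ε) / L⌉₊ with hNdef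
    have hargN : 0 ≤ (-Real.log ε) / L := by positivity
    have hNge : -Real.log ε ≤ (N : ℝ) * L := by
      have := Nat.le_ceil ((-Real.log ε) / L)
      calc -Real.log ε = ((-Real.log ε) / L) * L := by field_simp
        _ ≤ (N:ℝ) * L := mul_le_mul_of_nonneg_right this hL.le
    have hNlt : (N : ℝ) * L < -Real.log ε + L := by
      have h := Nat.ceil_lt_add_one hargN
      calc (N:ℝ) * L < ((-Real.log ε) / L + 1) * L := by
            apply mul_lt_mul_of_pos_right ?_ hL
            exact_mod_cast h
        _ = -Real.log ε + L := by field_simp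
    have hkN : k ^ N ≤ ε := by
      rw [← Real.log_le_log_iff (by positivity) hε0, Real.log_pow]
      rw [hLdef] at hNge; linarith
    -- covering of the thickening
    have hcover : Metric.cthickening ε S ⊆
        Set.Icc (-ε) (k ^ N * x₀ + ε) ∪
          ⋃ n ∈ Finset.range N, Set.Icc (k ^ n * x₀ - ε) (k ^ n * x₀ + ε) := by
      refine hcthick_sub.trans ?_
      rw [hTcpt.cthickening_eq_biUnion_closedBall hε0.le]
      apply Set.iUnion₂_subset
      rintro x hx
      rcases hx with rfl | ⟨n, rfl⟩
      · intro y hy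
        rw [Real.closedBall_eq_Icc] at hy
        left
        simp only [Set.mem_Icc] at hy ⊢
        constructor
        · linarith [hy.1]
        · nlinarith [hy.2, pow_pos hk0 N]
      · rcases lt_or_ge n N with h | h
        · intro y hy
          rw [Real.closedBall_eq_Icc] at hy
          right
          exact Set.mem_biUnion (Finset.mem_range.mpr h) hy
        · intro y hy
          rw [Real.closedBall_eq_Icc] at hy
          left
          have h1 : k ^ n ≤ k ^ N := pow_le_pow_of_le_one hk0.le hk1.le h
          have h2 : 0 < k ^ n := pow_pos hk0 n
          simp only [Set.mem_Icc] at hy ⊢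
          constructor
          · nlinarith [hy.1]
          · nlinarith [hy.2]
    have hvol1 : ∀ n : ℕ, volume (Set.Icc (k ^ n * x₀ - ε) (k ^ n * x₀ + ε))
        = ENNReal.ofReal (2 * ε) := fun n => by rw [Real.volume_Icc]; ring_nf
    have h1 : volume (Set.Icc (-ε) (k ^ N * x₀ + ε)) = ENNReal.ofReal (k ^ N * x₀ + 2 * ε) := by
      rw [Real.volume_Icc]; ring_nf
    have h2 : volume (⋃ n ∈ Finset.range N, Set.Icc (k ^ n * x₀ - ε) (k ^ n * x₀ + ε)) ≤
        ENNReal.ofReal (N * (2 * ε)) := by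
      refine (measure_biUnion_finset_le _ _).trans ?_
      simp only [hvol1]
      rw [Finset.sum_const, Finset.card_range, nsmul_eq_mul,
        ← ENNReal.ofReal_natCast, ← ENNReal.ofReal_mul (by positivity)]
    have hvolU : volume (Metric.cthickening ε S) ≤
        ENNReal.ofReal (k ^ N * x₀ + 2 * ε + N * (2 * ε)) := by
      refine (measure_mono hcover).trans ?_
      calc volume (Set.Icc (-ε) (k ^ N * x₀ + ε) ∪
            ⋃ n ∈ Finset.range N, Set.Icc (k ^ n * x₀ - ε) (k ^ n * x₀ + ε))
          ≤ volume (Set.Icc (-ε) (k ^ N * x₀ + ε)) +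
            volume (⋃ n ∈ Finset.range N, Set.Icc (k ^ n * x₀ - ε) (k ^ n * x₀ + ε)) :=
            measure_union_le _ _
        _ ≤ ENNReal.ofReal (k ^ N * x₀ + 2 * ε) + ENNReal.ofReal (N * (2 * ε)) := by
            rw [h1]; exact add_le_add_right h2 _
        _ = ENNReal.ofReal (k ^ N * x₀ + 2 * ε + N * (2 * ε)) :=
            (ENNReal.ofReal_add (by positivity) (by positivity)).symm
    have hlen : nbdLength S ε ≤ k ^ N * x₀ + 2 * ε + N * (2 * ε) :=
      ENNReal.toReal_le_of_le_ofReal (by positivity) hvolU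
    rw [div_le_iff₀ hdenpos]
    have hNbound : (N : ℝ) * L < -Real.log ε + L := hNlt
    have hbound : k ^ N * x₀ + 2 * ε + N * (2 * ε) ≤ (x₀ + 4 + 2 / L) * (ε * (-Real.log ε)) := by
      have e1 : k ^ N * x₀ ≤ ε * x₀ := mul_le_mul_of_nonneg_right hkN hx₀.le
      have e2 : (N:ℝ) ≤ (-Real.log ε) / L + 1 := by
        rw [← sub_le_iff_le_add, le_div_iff₀ hL]
        nlinarith [hNlt]
      have e3 : (N:ℝ) * (2*ε) ≤ ((-Real.log ε)/L + 1) * (2*ε) :=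
        mul_le_mul_of_nonneg_right e2 (by positivity)
      have e4 : (x₀ + 4 + 2/L) * (ε * (-Real.log ε))
          = x₀ * (ε * (-Real.log ε)) + 4 * (ε * (-Real.log ε)) + (2/L) * (ε * (-Real.log ε)) := by
        ring
      have e5 : ((-Real.log ε)/L + 1) * (2*ε) = (2/L) * (ε * (-Real.log ε)) + 2*ε := by
        field_simp
      nlinarith [mul_le_mul_of_nonneg_left hlog1 (mul_pos hε0 hx₀).le,
        mul_le_mul_of_nonneg_left hlog1 (by positivity : (0:ℝ) ≤ 4*ε)]
    linarith
  exact ⟨lower, upper⟩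
end

section
/- Let g(x) = kx with 0 < k < 1 and x₀ > 0, and let S = {k^n x₀ : n ∈ ℕ}. Then the box dimension of S is 0, and the upper 0-dimensional Minkowski content of S is +∞ (equivalently, limsup_{ε→0} |A_ε(S)|/ε = +∞). -/
open Set Filter Topology MeasureTheory
open scoped ENNReal

section Aux

variable {k x₀ : ℝ}

private lemma orbit_closure_subset (hk0 : 0 < k) (hk1 : k < 1) (hx₀ : 0 < x₀) :
    closure {y : ℝ | ∃ n : ℕ, y = k ^ n * x₀} ⊆
      insert 0 {y : ℝ | ∃ n : ℕ, y = k ^ n * x₀} := by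
  have hrange : {y : ℝ | ∃ n : ℕ, y = k ^ n * x₀} = Set.range (fun n : ℕ => k ^ n * x₀) := by
    ext y; simp [eq_comm]
  have hlim : Tendsto (fun n : ℕ => k ^ n * x₀) atTop (𝓝 0) := by
    have := (tendsto_pow_atTop_nhds_zero_of_lt_one hk0.le hk1).mul_const x₀
    simpa using this
  have hc : IsCompact (insert 0 (Set.range fun n : ℕ => k ^ n * x₀)) :=
    hlim.isCompact_insert_range
  rw [hrange]
  exact hc.isClosed.closure_subset_iff.mpr (Set.subset_insert _ _)

/-- Upper bound: if `k^N x₀ ≤ ε` then the `ε`-neighborhood has length `≤ (2N+3)ε`. -/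
private lemma orbit_nbdLength_le (hk0 : 0 < k) (hk1 : k < 1) (hx₀ : 0 < x₀) {ε : ℝ}
    (hε : 0 < ε) (N : ℕ) (hN : k ^ N * x₀ ≤ ε) :
    nbdLength {y : ℝ | ∃ n : ℕ, y = k ^ n * x₀} ε ≤ (2 * N + 3) * ε := by
  set S := {y : ℝ | ∃ n : ℕ, y = k ^ n * x₀} with hSdef
  have hsub : Metric.cthickening ε S ⊆
      Icc (-ε) (2 * ε) ∪ ⋃ n ∈ Finset.range N, Icc (k ^ n * x₀ - ε) (k ^ n * x₀ + ε) := by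
    rw [Metric.cthickening_eq_biUnion_closedBall S hε.le]
    refine Set.iUnion₂_subset fun x hx => ?_
    have hx' := orbit_closure_subset hk0 hk1 hx₀ hx
    rw [Real.closedBall_eq_Icc]
    rcases hx' with rfl | ⟨n, rfl⟩
    · intro y hy
      exact Or.inl ⟨by linarith [hy.1], by linarith [hy.2, hε.le]⟩
    · by_cases hn : n < N
      · intro y hy
        exact Or.inr (Set.mem_biUnion (Finset.mem_range.mpr hn) hy)
      · push_neg at hn
        have hpow : k ^ n ≤ k ^ N := by
          rcases eq_or_lt_of_le hn with h | h
          · rw [h]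
          · exact (pow_lt_pow_right_of_lt_one₀ hk0 hk1 h).le
        have hle : k ^ n * x₀ ≤ ε :=
          le_trans (by nlinarith [pow_pos hk0 n]) hN
        have hpos : 0 ≤ k ^ n * x₀ := by positivity
        intro y hy
        exact Or.inl ⟨by linarith [hy.1], by linarith [hy.2]⟩
  have hvol : volume (Metric.cthickening ε S) ≤ ENNReal.ofReal ((2 * N + 3) * ε) := by
    refine le_trans (measure_mono hsub) ?_
    refine le_trans (measure_union_le _ _) ?_
    have h1 : volume (Icc (-ε) (2 * ε)) = ENNReal.ofReal (3 * ε) := by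
      rw [Real.volume_Icc]; ring_nf
    have h2 : volume (⋃ n ∈ Finset.range N, Icc (k ^ n * x₀ - ε) (k ^ n * x₀ + ε)) ≤
        (N : ℝ≥0∞) * ENNReal.ofReal (2 * ε) := by
      refine le_trans (measure_biUnion_finset_le _ _) ?_
      have : ∀ n ∈ Finset.range N,
          volume (Icc (k ^ n * x₀ - ε) (k ^ n * x₀ + ε)) = ENNReal.ofReal (2 * ε) := by
        intro n _; rw [Real.volume_Icc]; ring_nf
      rw [Finset.sum_congr rfl this, Finset.sum_const, Finset.card_range, nsmul_eq_mul]
    calc volume (Icc (-ε) (2 * ε)) +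
          volume (⋃ n ∈ Finset.range N, Icc (k ^ n * x₀ - ε) (k ^ n * x₀ + ε))
        ≤ ENNReal.ofReal (3 * ε) + (N : ℝ≥0∞) * ENNReal.ofReal (2 * ε) := by
          rw [h1]; exact add_le_add le_rfl h2
      _ = ENNReal.ofReal ((2 * N + 3) * ε) := by
          rw [← ENNReal.ofReal_natCast N, ← ENNReal.ofReal_mul (by positivity),
            ← ENNReal.ofReal_add (by positivity) (by positivity)]
          ring_nf
  show (volume (Metric.cthickening ε S)).toReal ≤ (2 * N + 3) * ε
  exact ENNReal.toReal_le_of_le_ofReal (by positivity) hvol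

/-- Lower bound at the special scales `εₙ = kⁿ x₀ (1-k)/2`. -/
private lemma orbit_nbdLength_ge (hk0 : 0 < k) (hk1 : k < 1) (hx₀ : 0 < x₀) (n : ℕ) :
    2 * (n + 1) * (k ^ n * x₀ * ((1 - k) / 2)) ≤
      nbdLength {y : ℝ | ∃ n : ℕ, y = k ^ n * x₀} (k ^ n * x₀ * ((1 - k) / 2)) := by
  set S := {y : ℝ | ∃ n : ℕ, y = k ^ n * x₀} with hSdef
  set ε : ℝ := k ^ n * x₀ * ((1 - k) / 2) with hεdef
  have hε : 0 < ε := by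
    have : 0 < 1 - k := by linarith
    positivity
  set I : ℕ → Set ℝ := fun j => Icc (k ^ j * x₀ - ε) (k ^ j * x₀ + ε) with hIdef
  have key : ∀ i j : ℕ, i < j → j < n + 1 → Disjoint (I i) (I j) := by
    intro i j hlt hj
    have hgap : k ^ j * x₀ + ε < k ^ i * x₀ - ε := by
      have h1 : k ^ j ≤ k ^ (i + 1) := by
        rcases eq_or_lt_of_le (show i + 1 ≤ j from hlt) with h | h
        · rw [← h]
        · exact (pow_lt_pow_right_of_lt_one₀ hk0 hk1 h).le
      have h2 : k ^ n < k ^ i := pow_lt_pow_right_of_lt_one₀ hk0 hk1 (by omega)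
      have h3 : k ^ (i + 1) = k ^ i * k := pow_succ k i
      have h4 : 0 < 1 - k := by linarith
      rw [hεdef]
      nlinarith [mul_lt_mul_of_pos_right (mul_lt_mul_of_pos_right h2 h4) hx₀,
        mul_le_mul_of_nonneg_right (h1.trans_eq h3) hx₀.le]
    rw [Set.disjoint_left]
    rintro a ⟨ha1, ha2⟩ ⟨hb1, hb2⟩
    linarith
  have hdisj : (↑(Finset.range (n + 1)) : Set ℕ).PairwiseDisjoint I := by
    intro i hi j hj hij
    simp only [Finset.coe_range, Set.mem_Iio] at hi hj
    rcases hij.lt_or_gt with h | h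
    · exact key i j h hj
    · exact (key j i h hi).symm
  have hIsub : ∀ j ∈ Finset.range (n + 1), I j ⊆ Metric.cthickening ε S := by
    intro j _
    have hmem : (k ^ j * x₀) ∈ S := ⟨j, rfl⟩
    have := Metric.closedBall_subset_cthickening hmem ε
    rwa [Real.closedBall_eq_Icc] at this
  have hvol : ENNReal.ofReal (2 * (n + 1) * ε) ≤ volume (Metric.cthickening ε S) := by
    have hU : (⋃ j ∈ Finset.range (n + 1), I j) ⊆ Metric.cthickening ε S :=
      Set.iUnion₂_subset hIsub
    refine le_trans ?_ (measure_mono hU)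
    rw [measure_biUnion_finset hdisj (fun j _ => measurableSet_Icc)]
    have : ∀ j ∈ Finset.range (n + 1), volume (I j) = ENNReal.ofReal (2 * ε) := by
      intro j _; rw [hIdef]; simp only []; rw [Real.volume_Icc]; ring_nf
    rw [Finset.sum_congr rfl this, Finset.sum_const, Finset.card_range, nsmul_eq_mul]
    rw [← ENNReal.ofReal_natCast (n + 1), ← ENNReal.ofReal_mul (by positivity)]
    apply ENNReal.ofReal_le_ofReal
    push_cast
    nlinarith [hε]
  have hfin : volume (Metric.cthickening ε S) ≠ ⊤ := by
    have hb : Bornology.IsBounded S := by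
      apply Bornology.IsBounded.subset (Metric.isBounded_Icc 0 x₀)
      rintro y ⟨m, rfl⟩
      have h1 : k ^ m ≤ 1 := pow_le_one₀ hk0.le hk1.le
      have h2 : 0 < k ^ m := pow_pos hk0 m
      exact ⟨by nlinarith, by nlinarith⟩
    exact (hb.cthickening.measure_lt_top).ne
  have := (ENNReal.ofReal_le_iff_le_toReal hfin).mp hvol
  exact this

end Aux

/-- For the orbit `S = {kⁿ x₀}` of `g(x) = kx`, `0 < k < 1`: the box dimension of `S`
is `0` (the upper `s`-dimensional Minkowski content vanishes for every `s > 0`),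
while the upper `0`-dimensional Minkowski content is `+∞`
(`limsup_{ε→0} |A_ε(S)|/ε = +∞`). -/
theorem linear_orbit_box_dimension_zero
    (k x₀ : ℝ) (hk : k ∈ Ioo (0:ℝ) 1) (hx₀ : 0 < x₀) :
    (∀ s : ℝ, 0 < s →
      Tendsto (fun ε => nbdLength {y : ℝ | ∃ n : ℕ, y = k ^ n * x₀} ε / ε ^ (1 - s))
        (𝓝[>] 0) (𝓝 0)) ∧
    (∀ C : ℝ, ∃ᶠ ε in 𝓝[>] (0:ℝ),
      C < nbdLength {y : ℝ | ∃ n : ℕ, y = k ^ n * x₀} ε / ε) := by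
  obtain ⟨hk0, hk1⟩ := hk
  set S := {y : ℝ | ∃ n : ℕ, y = k ^ n * x₀} with hSdef
  have hL : 0 < Real.log k⁻¹ := Real.log_pos ((one_lt_inv₀ hk0).mpr hk1)
  constructor
  · intro s hs
    set L : ℝ := Real.log k⁻¹ with hLdef
    set Nf : ℝ → ℕ := fun ε => ⌈Real.log (x₀ / ε) / L⌉₊ with hNf
    have hNle : ∀ ε : ℝ, 0 < ε → k ^ Nf ε * x₀ ≤ ε := by
      intro ε hε
      have h1 : Real.log (x₀ / ε) / L ≤ (Nf ε : ℝ) := Nat.le_ceil _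
      have h2 : Real.log (x₀ / ε) ≤ (Nf ε : ℝ) * L := by
        rw [div_le_iff₀ hL] at h1; exact h1
      have h3 : Real.log (x₀ / ε) ≤ Real.log (k⁻¹ ^ Nf ε) := by
        rw [Real.log_pow]; exact h2
      have h4 : x₀ / ε ≤ k⁻¹ ^ Nf ε := by
        have hxe : 0 < x₀ / ε := by positivity
        have hkp : (0:ℝ) < k⁻¹ ^ Nf ε := by positivity
        exact (Real.log_le_log_iff hxe hkp).mp h3
      have h5 : x₀ ≤ k⁻¹ ^ Nf ε * ε := by
        rw [div_le_iff₀ hε] at h4; exact h4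
      have h6 : k ^ Nf ε * (k⁻¹ ^ Nf ε * ε) = ε := by
        rw [← mul_assoc, ← mul_pow, mul_inv_cancel₀ hk0.ne', one_pow, one_mul]
      calc k ^ Nf ε * x₀ ≤ k ^ Nf ε * (k⁻¹ ^ Nf ε * ε) :=
            mul_le_mul_of_nonneg_left h5 (by positivity)
        _ = ε := h6
    have hg : Tendsto (fun ε : ℝ =>
        (2 * Real.log x₀ / L + 5) * ε ^ s - (2 / L) * (Real.log ε * ε ^ s))
        (𝓝[>] (0:ℝ)) (𝓝 0) := by
      have h1 : Tendsto (fun ε : ℝ => ε ^ s) (𝓝[>] (0:ℝ)) (𝓝 0) := by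
        have h : Tendsto (fun ε : ℝ => ε ^ s) (𝓝 (0:ℝ)) (𝓝 ((0:ℝ) ^ s)) :=
          (Real.continuousAt_rpow_const 0 s (Or.inr hs.le)).tendsto
        rw [Real.zero_rpow hs.ne'] at h
        exact h.mono_left nhdsWithin_le_nhds
      have h2 := tendsto_log_mul_rpow_nhdsGT_zero hs
      have h3 := (h1.const_mul (2 * Real.log x₀ / L + 5)).sub (h2.const_mul (2 / L))
      simpa using h3
    refine squeeze_zero' ?_ ?_ hg
    · filter_upwards [self_mem_nhdsWithin] with ε (hε : 0 < ε)
      have : (0:ℝ) < ε ^ (1 - s) := Real.rpow_pos_of_pos hε _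
      exact div_nonneg ENNReal.toReal_nonneg this.le
    · filter_upwards [self_mem_nhdsWithin, Ioo_mem_nhdsGT hx₀]
        with ε (hε : 0 < ε) hεx
      have hεx' : ε < x₀ := hεx.2
      have hub := orbit_nbdLength_le hk0 hk1 hx₀ hε (Nf ε) (hNle ε hε)
      have hrp : (0:ℝ) < ε ^ (1 - s) := Real.rpow_pos_of_pos hε _
      have hrs : (0:ℝ) < ε ^ s := Real.rpow_pos_of_pos hε _
      have hsplit : ε / ε ^ (1 - s) = ε ^ s := by
        rw [Real.rpow_sub hε, Real.rpow_one]
        field_simp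
      have hNub : (Nf ε : ℝ) ≤ Real.log (x₀ / ε) / L + 1 := by
        have hr : 0 ≤ Real.log (x₀ / ε) / L := by
          apply div_nonneg _ hL.le
          apply Real.log_nonneg
          rw [le_div_iff₀ hε]; linarith
        exact (Nat.ceil_lt_add_one hr).le
      have hlogd : Real.log (x₀ / ε) = Real.log x₀ - Real.log ε :=
        Real.log_div hx₀.ne' hε.ne'
      calc nbdLength S ε / ε ^ (1 - s)
          ≤ ((2 * Nf ε + 3) * ε) / ε ^ (1 - s) := by gcongr
        _ = (2 * Nf ε + 3) * (ε / ε ^ (1 - s)) := by ring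
        _ = (2 * Nf ε + 3) * ε ^ s := by rw [hsplit]
        _ ≤ (2 * (Real.log (x₀ / ε) / L + 1) + 3) * ε ^ s :=
            mul_le_mul_of_nonneg_right (by linarith) hrs.le
        _ = (2 * Real.log x₀ / L + 5) * ε ^ s - (2 / L) * (Real.log ε * ε ^ s) := by
            rw [hlogd]; ring
  · intro C
    set εn : ℕ → ℝ := fun n => k ^ n * x₀ * ((1 - k) / 2) with hεn
    have hone : (0:ℝ) < 1 - k := by linarith
    have hεpos : ∀ n, 0 < εn n := fun n => by positivity
    have htend : Tendsto εn atTop (𝓝[>] (0:ℝ)) := by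
      apply tendsto_nhdsWithin_of_tendsto_nhds_of_eventually_within
      · have h := (tendsto_pow_atTop_nhds_zero_of_lt_one hk0.le hk1).mul_const
          (x₀ * ((1 - k) / 2))
        simpa [hεn, mul_assoc] using h
      · exact Eventually.of_forall fun n => hεpos n
    refine htend.frequently (Eventually.frequently ?_)
    filter_upwards [eventually_ge_atTop ⌈C⌉₊] with n hn
    have hC1 : C ≤ (⌈C⌉₊ : ℝ) := Nat.le_ceil C
    have hC2 : ((⌈C⌉₊ : ℕ) : ℝ) ≤ (n : ℝ) := Nat.cast_le.mpr hn
    have hC : C < 2 * ((n : ℝ) + 1) := by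
      have hn0 : (0:ℝ) ≤ (n : ℝ) := Nat.cast_nonneg n
      linarith
    have hlow := orbit_nbdLength_ge hk0 hk1 hx₀ n
    have : 2 * ((n : ℝ) + 1) ≤ nbdLength S (εn n) / εn n := by
      rw [le_div_iff₀ (hεpos n)]
      exact hlow
    linarith
end

section
/- Let f(x) = x^α with α > 1, g = id − f, x₀ ∈ (0,1) small, and S the orbit of x₀ under g. Then |A_ε(S)| ≍ ε^{1/α} as ε → 0, and consequently the box dimension of S equals 1 − 1/α. -/
open Set Filter Topology MeasureTheory

section aux
variable {α x₀ : ℝ} (hα : 1 < α) (hx₀ : x₀ ∈ Ioo (0:ℝ) 1)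
    {x : ℕ → ℝ} (hx0 : x 0 = x₀)
    (hrec : ∀ n, x (n + 1) = x n - x n ^ α)

include hα hx₀ hx0 hrec

lemma orbit_mem : ∀ n, x n ∈ Ioo (0:ℝ) 1 := by
  intro n
  induction n with
  | zero => rw [hx0]; exact hx₀
  | succ n ih =>
    obtain ⟨h0, h1⟩ := ih
    have hlt : x n ^ α < x n := by
      have := Real.rpow_lt_rpow_of_exponent_gt h0 h1 hα
      simpa using this
    have hpos : 0 < x n ^ α := Real.rpow_pos_of_pos h0 α
    rw [hrec n]
    constructor <;> [linarith; linarith]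

lemma orbit_anti : StrictAnti x := by
  apply strictAnti_nat_of_succ_lt
  intro n
  have h0 := (orbit_mem hα hx₀ hx0 hrec n).1
  have hpos : 0 < x n ^ α := Real.rpow_pos_of_pos h0 α
  rw [hrec n]; linarith

end aux

section aux2
variable {α x₀ : ℝ} (hα : 1 < α) (hx₀ : x₀ ∈ Ioo (0:ℝ) 1)
    {x : ℕ → ℝ} (hx0 : x 0 = x₀)
    (hrec : ∀ n, x (n + 1) = x n - x n ^ α)
include hα hx₀ hx0 hrec

lemma orbit_y_step (n : ℕ) :
    x n ^ (1 - α) + (α - 1) ≤ x (n + 1) ^ (1 - α) := by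
  obtain ⟨ha0, ha1⟩ := orbit_mem hα hx₀ hx0 hrec n
  set a := x n with ha
  set t := a ^ (α - 1) with ht
  have ht0 : 0 < t := Real.rpow_pos_of_pos ha0 _
  have ht1 : t < 1 := Real.rpow_lt_one ha0.le ha1 (by linarith)
  have hsplit : a ^ α = a * t := by
    have h := Real.rpow_add ha0 1 (α - 1)
    rw [show (1 : ℝ) + (α - 1) = α by ring, Real.rpow_one] at h
    rw [ht, h]
  have hxn1 : x (n + 1) = a * (1 - t) := by rw [hrec n, hsplit]; ring
  have hkey : 1 + (α - 1) * t ≤ (1 - t) ^ (1 - α) := by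
    rw [Real.rpow_def_of_pos (by linarith)]
    have hlog : Real.log (1 - t) ≤ -t := by
      have := Real.log_le_sub_one_of_pos (x := 1 - t) (by linarith)
      linarith
    have h1 : (α - 1) * t ≤ Real.log (1 - t) * (1 - α) := by nlinarith
    have h2 := Real.add_one_le_exp (Real.log (1 - t) * (1 - α))
    linarith
  have hinv : a ^ (1 - α) * t = 1 := by
    rw [ht, ← Real.rpow_add ha0]
    norm_num
  have hmul : x (n + 1) ^ (1 - α) = a ^ (1 - α) * (1 - t) ^ (1 - α) := by
    rw [hxn1, Real.mul_rpow ha0.le (by linarith)]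
  have hapos : 0 < a ^ (1 - α) := Real.rpow_pos_of_pos ha0 _
  rw [hmul]
  nlinarith [mul_le_mul_of_nonneg_left hkey hapos.le]

lemma orbit_y_ge (n : ℕ) : (α - 1) * n ≤ x n ^ (1 - α) := by
  induction n with
  | zero =>
    simp only [Nat.cast_zero, mul_zero]
    exact Real.rpow_nonneg (orbit_mem hα hx₀ hx0 hrec 0).1.le _
  | succ n ih =>
    have := orbit_y_step hα hx₀ hx0 hrec n
    push_cast
    nlinarith

lemma orbit_tendsto : Tendsto x atTop (𝓝 0) := by
  have hanti : Antitone x := (orbit_anti hα hx₀ hx0 hrec).antitone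
  have hbdd : BddBelow (Set.range x) :=
    ⟨0, by rintro _ ⟨n, rfl⟩; exact (orbit_mem hα hx₀ hx0 hrec n).1.le⟩
  set L := ⨅ n, x n with hL
  have hlim : Tendsto x atTop (𝓝 L) := tendsto_atTop_ciInf hanti hbdd
  have hL0 : 0 ≤ L := le_ciInf fun n => (orbit_mem hα hx₀ hx0 hrec n).1.le
  have hlim1 : Tendsto (fun n => x (n + 1)) atTop (𝓝 L) :=
    hlim.comp (tendsto_add_atTop_nat 1)
  have hcont : ContinuousAt (fun t : ℝ => t ^ α) L :=
    Real.continuousAt_rpow_const L α (Or.inr (by linarith))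
  have hlim2 : Tendsto (fun n => x n - x n ^ α) atTop (𝓝 (L - L ^ α)) :=
    hlim.sub ((hcont.tendsto).comp hlim)
  have heq : L = L - L ^ α :=
    tendsto_nhds_unique (hlim1.congr (fun n => hrec n)) hlim2
  have : L ^ α = 0 := by linarith
  have hLz : L = 0 := by
    rcases (Real.rpow_eq_zero hL0 (by linarith)).mp this with h
    exact h
  rwa [hLz] at hlim

end aux2




section aux3
variable {α x₀ : ℝ} (hα : 1 < α) (hx₀ : x₀ ∈ Ioo (0:ℝ) 1)
    {x : ℕ → ℝ} (hx0 : x 0 = x₀)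
    (hrec : ∀ n, x (n + 1) = x n - x n ^ α)
    (hmem : ∀ n, x n ∈ Ioo (0:ℝ) 1)
    (hanti : StrictAnti x)
    (hyge : ∀ n : ℕ, (α - 1) * n ≤ x n ^ (1 - α))
    (htend : Tendsto x atTop (𝓝 0))

include hα hx₀ hx0 hrec hmem hanti hyge htend

lemma nbd_two_sided (ε : ℝ) (hε : 0 < ε) (hεs : 2 * ε < x₀ ^ α) :
    ∃ N : ℕ,
      (N : ℝ) ≤ ((2*ε) ^ (1/α)) ^ (1-α) / (α-1) + 2 ∧
      (1 - x₀ ^ (α-1)) * (2*ε) ^ (1/α) ≤ nbdLength (Set.range x) ε ∧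
      nbdLength (Set.range x) ε ≤ (2*ε) ^ (1/α) + 4*ε + ((N:ℝ)+1) * (4*ε) := by
  have hα0 : (0:ℝ) < α := by linarith
  have h2ε : (0:ℝ) < 2 * ε := by linarith
  set c : ℝ := (2*ε) ^ (1/α) with hc
  have hc0 : 0 < c := Real.rpow_pos_of_pos h2ε _
  have hcα : c ^ α = 2 * ε := by
    rw [hc, ← Real.rpow_mul h2ε.le, one_div, inv_mul_cancel₀ (ne_of_gt hα0),
      Real.rpow_one]
  -- c < x₀
  have hcx₀ : c < x₀ := by
    have := Real.rpow_lt_rpow h2ε.le hεs (by positivity : (0:ℝ) < 1/α)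
    rwa [← Real.rpow_mul hx₀.1.le, mul_one_div, div_self (ne_of_gt hα0),
      Real.rpow_one] at this
  -- N : first index with x N ≤ c
  have hex : ∃ n, x n ≤ c := by
    rcases (htend.eventually (gt_mem_nhds hc0)).exists with ⟨n, hn⟩
    exact ⟨n, hn.le⟩
  set N := Nat.find hex with hNdef
  have hxN : x N ≤ c := Nat.find_spec hex
  have hxlt : ∀ m, m < N → c < x m := fun m hm =>
    lt_of_not_ge (Nat.find_min hex hm)
  have hN1 : 1 ≤ N := by
    rcases Nat.eq_zero_or_pos N with h | h
    · exfalso; have := hxN; rw [h, hx0] at this; linarith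
    · exact h
  have hxNpos : 0 < x N := (hmem N).1
  -- x n ≤ x₀ for all n
  have hle₀ : ∀ n, x n ≤ x₀ := by
    intro n
    rcases Nat.eq_zero_or_pos n with h | h
    · rw [h, hx0]
    · rw [← hx0]; exact (hanti.antitone (Nat.zero_le n))
  have hx₀α1 : x₀ ^ (α - 1) < 1 :=
    Real.rpow_lt_one hx₀.1.le hx₀.2 (by linarith)
  -- lower bound for x N
  have hxNlow : (1 - x₀ ^ (α-1)) * c ≤ x N := by
    obtain ⟨M, hM⟩ : ∃ M, N = M + 1 := ⟨N - 1, (Nat.succ_pred_eq_of_pos hN1).symm⟩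
    have hcM : c < x M := hxlt M (by omega)
    have hMpos : 0 < x M := (hmem M).1
    have hsplit : x M ^ α = x M * x M ^ (α - 1) := by
      have h := Real.rpow_add hMpos 1 (α - 1)
      rw [show (1 : ℝ) + (α - 1) = α by ring, Real.rpow_one] at h
      rw [h]
    have hMα1 : x M ^ (α - 1) ≤ x₀ ^ (α - 1) :=
      Real.rpow_le_rpow hMpos.le (hle₀ M) (by linarith)
    have hxN' : x N = x M * (1 - x M ^ (α - 1)) := by
      rw [hM, hrec M, hsplit]; ring
    rw [hxN']
    nlinarith [Real.rpow_nonneg hMpos.le (α - 1)]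
  -- bound on N
  have hNbound : (N : ℝ) ≤ c ^ (1-α) / (α-1) + 2 := by
    rcases le_or_gt N 2 with h | h
    · have : (N:ℝ) ≤ 2 := by exact_mod_cast h
      have hpos : (0:ℝ) < c ^ (1-α) := Real.rpow_pos_of_pos hc0 _
      have hd : (0:ℝ) ≤ c ^ (1-α) / (α-1) := div_nonneg hpos.le (by linarith)
      linarith
    · obtain ⟨M, hM⟩ : ∃ M, N = M + 1 := ⟨N - 1, (Nat.succ_pred_eq_of_pos hN1).symm⟩
      have hcM : c < x M := hxlt M (by omega)
      have hrr : x M ^ (1-α) < c ^ (1-α) :=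
        Real.rpow_lt_rpow_of_neg hc0 hcM (by linarith)
      have hy := hyge M
      have : (α - 1) * M < c ^ (1-α) := lt_of_le_of_lt hy hrr
      have hM' : (M : ℝ) < c ^ (1-α) / (α-1) := by
        rw [lt_div_iff₀ (by linarith)]; linarith [mul_comm (α-1) (M:ℝ)]
      rw [hM]
      push_cast
      linarith
  -- lower bound: Icc 0 (x N) ⊆ cthickening
  have hsub : Icc (0:ℝ) (x N) ⊆ Metric.cthickening ε (Set.range x) := by
    intro t ht
    obtain ⟨ht0, htN⟩ := ht
    have hkey : ∃ m, dist t (x m) ≤ ε := by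
      rcases le_or_gt t ε with h | h
      · rcases (htend.eventually (gt_mem_nhds hε)).exists with ⟨m, hm⟩
        refine ⟨m, ?_⟩
        rw [Real.dist_eq, abs_le]
        have := (hmem m).1
        constructor <;> linarith
      · have hex2 : ∃ k, x k < t := by
          rcases (htend.eventually (gt_mem_nhds (lt_trans hε h))).exists with ⟨k, hk⟩
          exact ⟨k, hk⟩
        set m := Nat.find hex2 with hmdef
        have hxm : x m < t := Nat.find_spec hex2
        have hxj : ∀ j, j < m → t ≤ x j := fun j hj =>
          le_of_not_gt (Nat.find_min hex2 hj)
        -- m > N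
        have hmN : N < m := by
          by_contra hcon
          push_neg at hcon
          have : x N ≤ x m := hanti.antitone hcon
          linarith
        obtain ⟨M, hMdef2⟩ : ∃ M, m = M + 1 := ⟨m - 1, by omega⟩
        have hMN : N ≤ M := by omega
        have htM : t ≤ x M := hxj M (by omega)
        have hxMN : x M ≤ x N := hanti.antitone hMN
        have hgap : x M - x m = x M ^ α := by rw [hMdef2, hrec M]; ring
        have hgaple : x M ^ α ≤ 2 * ε := by
          rw [← hcα]
          exact Real.rpow_le_rpow (hmem M).1.le (le_trans hxMN hxN) hα0.le
        rcases le_or_gt (t - x m) ε with h2 | h2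
        · refine ⟨m, ?_⟩
          rw [Real.dist_eq, abs_le]
          constructor <;> linarith
        · refine ⟨M, ?_⟩
          rw [Real.dist_eq, abs_le]
          constructor <;> linarith
    obtain ⟨m, hm⟩ := hkey
    exact Metric.mem_cthickening_of_dist_le t (x m) ε _ ⟨m, rfl⟩ hm
  -- upper bound cover
  have hcover : Metric.cthickening ε (Set.range x) ⊆
      Icc (-(2*ε)) (x N + 2*ε) ∪ ⋃ n ∈ Finset.range (N+1), Icc (x n - 2*ε) (x n + 2*ε) := by
    intro t ht
    have ht' : t ∈ Metric.thickening (2*ε) (Set.range x) :=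
      Metric.cthickening_subset_thickening' h2ε (by linarith) _ ht
    rw [Metric.mem_thickening_iff] at ht'
    obtain ⟨z, ⟨m, rfl⟩, hdist⟩ := ht'
    rw [Real.dist_eq, abs_lt] at hdist
    rcases le_or_gt m N with h | h
    · right
      simp only [Set.mem_iUnion, exists_prop]
      exact ⟨m, Finset.mem_range.mpr (by omega),
        by linarith [hdist.1], by linarith [hdist.2]⟩
    · left
      have h1 : x m ≤ x N := hanti.antitone h.le
      have h2 : 0 < x m := (hmem m).1
      exact ⟨by linarith [hdist.1], by linarith [hdist.2]⟩
  -- volume of the cover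
  have hvol_cover : volume (Icc (-(2*ε)) (x N + 2*ε) ∪
      ⋃ n ∈ Finset.range (N+1), Icc (x n - 2*ε) (x n + 2*ε)) ≤
      ENNReal.ofReal ((x N + 4*ε) + ((N:ℝ)+1) * (4*ε)) := by
    refine le_trans (measure_union_le _ _) ?_
    have h1 : volume (Icc (-(2*ε)) (x N + 2*ε)) = ENNReal.ofReal (x N + 4*ε) := by
      rw [Real.volume_Icc]; congr 1; ring
    have h2 : volume (⋃ n ∈ Finset.range (N+1), Icc (x n - 2*ε) (x n + 2*ε)) ≤
        ENNReal.ofReal (((N:ℝ)+1) * (4*ε)) := by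
      refine le_trans (measure_biUnion_finset_le _ _) ?_
      have : ∀ n ∈ Finset.range (N+1), volume (Icc (x n - 2*ε) (x n + 2*ε)) =
          ENNReal.ofReal (4*ε) := by
        intro n _; rw [Real.volume_Icc]; congr 1; ring
      rw [Finset.sum_congr rfl this, Finset.sum_const, Finset.card_range,
        nsmul_eq_mul]
      rw [← ENNReal.ofReal_natCast (N+1), ← ENNReal.ofReal_mul (by positivity)]
      apply ENNReal.ofReal_le_ofReal
      push_cast
      nlinarith [hε]
    calc volume (Icc (-(2*ε)) (x N + 2*ε)) +
        volume (⋃ n ∈ Finset.range (N+1), Icc (x n - 2*ε) (x n + 2*ε))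
        ≤ ENNReal.ofReal (x N + 4*ε) + ENNReal.ofReal (((N:ℝ)+1) * (4*ε)) := by
          rw [h1]; exact add_le_add le_rfl h2
      _ = ENNReal.ofReal ((x N + 4*ε) + ((N:ℝ)+1) * (4*ε)) := by
          rw [ENNReal.ofReal_add (add_nonneg hxNpos.le (by linarith)) (by positivity),
            ENNReal.ofReal_add hxNpos.le (by linarith)]
  have hvol_le : volume (Metric.cthickening ε (Set.range x)) ≤
      ENNReal.ofReal ((x N + 4*ε) + ((N:ℝ)+1) * (4*ε)) :=
    le_trans (measure_mono hcover) hvol_cover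
  have hvol_ne : volume (Metric.cthickening ε (Set.range x)) ≠ ⊤ :=
    ne_top_of_le_ne_top ENNReal.ofReal_ne_top hvol_le
  refine ⟨N, hNbound, ?_, ?_⟩
  · -- lower bound
    have h1 : ENNReal.ofReal (x N) ≤ volume (Metric.cthickening ε (Set.range x)) := by
      calc ENNReal.ofReal (x N) = volume (Icc (0:ℝ) (x N)) := by
            rw [Real.volume_Icc, sub_zero]
        _ ≤ _ := measure_mono hsub
    have h2 := ENNReal.toReal_mono hvol_ne h1
    rw [ENNReal.toReal_ofReal hxNpos.le] at h2
    calc (1 - x₀ ^ (α-1)) * c ≤ x N := hxNlow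
      _ ≤ nbdLength (Set.range x) ε := h2
  · -- upper bound
    have := ENNReal.toReal_le_of_le_ofReal (by positivity) hvol_le
    calc nbdLength (Set.range x) ε ≤ (x N + 4*ε) + ((N:ℝ)+1) * (4*ε) := this
      _ ≤ (c + 4*ε) + ((N:ℝ)+1) * (4*ε) := by linarith
      _ = c + 4*ε + ((N:ℝ)+1) * (4*ε) := by ring

end aux3




section aux4
variable {α x₀ : ℝ} (hα : 1 < α) (hx₀ : x₀ ∈ Ioo (0:ℝ) 1)
    {x : ℕ → ℝ}
    (hts : ∀ ε : ℝ, 0 < ε → 2 * ε < x₀ ^ α →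
      ∃ N : ℕ,
        (N : ℝ) ≤ ((2*ε) ^ (1/α)) ^ (1-α) / (α-1) + 2 ∧
        (1 - x₀ ^ (α-1)) * (2*ε) ^ (1/α) ≤ nbdLength (Set.range x) ε ∧
        nbdLength (Set.range x) ε ≤ (2*ε) ^ (1/α) + 4*ε + ((N:ℝ)+1) * (4*ε))
include hα hx₀ hts

lemma eventual_bounds :
    ∃ A B : ℝ, 0 < A ∧ A ≤ B ∧ ∀ᶠ ε in 𝓝[>] (0:ℝ),
      A ≤ nbdLength (Set.range x) ε / ε ^ (1 / α) ∧
      nbdLength (Set.range x) ε / ε ^ (1 / α) ≤ B := by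
  have hα0 : (0:ℝ) < α := by linarith
  have hx₀α1 : x₀ ^ (α - 1) < 1 :=
    Real.rpow_lt_one hx₀.1.le hx₀.2 (by linarith)
  set A : ℝ := (1 - x₀ ^ (α-1)) * 2 ^ ((1:ℝ)/α) with hA
  have hApos : 0 < A := by
    have : (0:ℝ) < 2 ^ ((1:ℝ)/α) := Real.rpow_pos_of_pos (by norm_num) _
    nlinarith
  set B₀ : ℝ := 2 ^ ((1:ℝ)/α) + 16 + 4 * 2 ^ ((1-α)/α) / (α-1) with hB₀
  refine ⟨A, max A B₀, hApos, le_max_left _ _, ?_⟩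
  have hδ : (0:ℝ) < min (x₀ ^ α / 2) 1 := by
    have : (0:ℝ) < x₀ ^ α := Real.rpow_pos_of_pos hx₀.1 _
    positivity
  filter_upwards [Ioo_mem_nhdsGT_of_mem (by exact ⟨le_refl (0:ℝ), hδ⟩ :
      (0:ℝ) ∈ Ico 0 (min (x₀ ^ α / 2) 1))] with ε hε
  obtain ⟨hε0, hεlt⟩ := hε
  have hε1 : ε < 1 := lt_of_lt_of_le hεlt (min_le_right _ _)
  have hεs : 2 * ε < x₀ ^ α := by
    have := lt_of_lt_of_le hεlt (min_le_left _ _)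
    linarith
  obtain ⟨N, hN, hlow, hupp⟩ := hts ε hε0 hεs
  have hεp : (0:ℝ) < ε ^ ((1:ℝ)/α) := Real.rpow_pos_of_pos hε0 _
  have hsplit : (2*ε) ^ ((1:ℝ)/α) = 2 ^ ((1:ℝ)/α) * ε ^ ((1:ℝ)/α) :=
    Real.mul_rpow (by norm_num) hε0.le
  constructor
  · rw [le_div_iff₀ hεp]
    calc A * ε ^ ((1:ℝ)/α) = (1 - x₀ ^ (α-1)) * (2*ε) ^ ((1:ℝ)/α) := by
          rw [hsplit, hA]; ring
      _ ≤ nbdLength (Set.range x) ε := hlow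
  · rw [div_le_iff₀ hεp]
    refine le_trans hupp ?_
    refine le_trans ?_ (mul_le_mul_of_nonneg_right (le_max_right A B₀) hεp.le : 
      B₀ * ε ^ ((1:ℝ)/α) ≤ max A B₀ * ε ^ ((1:ℝ)/α))
    -- key: c^(1-α) * ε = 2^((1-α)/α) * ε^(1/α)
    have e2 : ε ^ ((1-α)/α) * ε = ε ^ ((1:ℝ)/α) := by
      nth_rewrite 2 [← Real.rpow_one ε]
      rw [← Real.rpow_add hε0]
      congr 1
      field_simp
      ring
    have hkey : ((2*ε) ^ ((1:ℝ)/α)) ^ (1-α) * ε = 2 ^ ((1-α)/α) * ε ^ ((1:ℝ)/α) := by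
      rw [← Real.rpow_mul (by linarith : (0:ℝ) ≤ 2*ε),
        show (1:ℝ)/α * (1-α) = (1-α)/α by ring,
        Real.mul_rpow (by norm_num) hε0.le, mul_assoc, e2]
    have hεpow : ε ≤ ε ^ ((1:ℝ)/α) := by
      nth_rewrite 1 [← Real.rpow_one ε]
      exact Real.rpow_le_rpow_of_exponent_ge hε0 hε1.le
        (by rw [div_le_one hα0]; linarith)
    have hNmul : ((N:ℝ)+1) * (4*ε) ≤
        (((2*ε) ^ ((1:ℝ)/α)) ^ (1-α) / (α-1) + 3) * (4*ε) :=
      mul_le_mul_of_nonneg_right (by linarith) (by linarith)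
    have hc1 : (0:ℝ) < 2 ^ ((1-α)/α) := Real.rpow_pos_of_pos (by norm_num) _
    have expand : (((2*ε) ^ ((1:ℝ)/α)) ^ (1-α) / (α-1) + 3) * (4*ε)
        = 4 * (((2*ε) ^ ((1:ℝ)/α)) ^ (1-α) * ε) / (α-1) + 12 * ε := by
      ring
    rw [expand, hkey] at hNmul
    have hB₀exp : (max A B₀) * ε ^ ((1:ℝ)/α) ≥ B₀ * ε ^ ((1:ℝ)/α) :=
      mul_le_mul_of_nonneg_right (le_max_right A B₀) hεp.le
    have : B₀ * ε ^ ((1:ℝ)/α) = 2 ^ ((1:ℝ)/α) * ε ^ ((1:ℝ)/α)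
        + 16 * ε ^ ((1:ℝ)/α) + 4 * (2 ^ ((1-α)/α) * ε ^ ((1:ℝ)/α)) / (α-1) := by
      rw [hB₀]; ring
    rw [this, hsplit]
    linarith
end aux4



lemma dim_eq {α : ℝ} (hα : 1 < α) (f : ℝ → ℝ) (hf : ∀ ε, 0 ≤ f ε)
    (A B : ℝ) (hA : 0 < A)
    (hbound : ∀ᶠ ε in 𝓝[>] (0:ℝ), A ≤ f ε / ε ^ (1/α) ∧ f ε / ε ^ (1/α) ≤ B) :
    sInf {s : ℝ | 0 ≤ s ∧ Tendsto (fun ε => f ε / ε ^ (1 - s)) (𝓝[>] 0) (𝓝 0)}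
      = 1 - 1 / α := by
  have hα0 : (0:ℝ) < α := by linarith
  set D : ℝ := 1 - 1/α with hD
  have hD0 : 0 < D := by
    have : 1/α < 1 := by rw [div_lt_one hα0]; linarith
    simp only [hD]; linarith
  have hsmall : ∀ᶠ ε in 𝓝[>] (0:ℝ), ε ∈ Ioo (0:ℝ) 1 :=
    Ioo_mem_nhdsGT_of_mem (by constructor <;> norm_num)
  set T := {s : ℝ | 0 ≤ s ∧ Tendsto (fun ε => f ε / ε ^ (1 - s)) (𝓝[>] (0:ℝ)) (𝓝 0)}
    with hT
  have hmem : ∀ s, D < s → s ∈ T := by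
    intro s hs
    have hp : 0 < s - D := by linarith
    refine ⟨by linarith, ?_⟩
    have h1 : Tendsto (fun ε : ℝ => ε ^ (s - D)) (𝓝[>] (0:ℝ)) (𝓝 0) := by
      have h := (Real.continuousAt_rpow_const 0 (s - D) (Or.inr hp.le)).tendsto
      rw [Real.zero_rpow (ne_of_gt hp)] at h
      exact h.mono_left nhdsWithin_le_nhds
    have h2 : Tendsto (fun ε : ℝ => B * ε ^ (s - D)) (𝓝[>] (0:ℝ)) (𝓝 0) := by
      have := h1.const_mul B
      rwa [mul_zero] at this
    refine squeeze_zero' ?_ ?_ h2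
    · filter_upwards [hsmall] with ε hε
      exact div_nonneg (hf ε) (Real.rpow_nonneg hε.1.le _)
    · filter_upwards [hsmall, hbound] with ε hε hb
      obtain ⟨hε0, hε1⟩ := hε
      have hεp : (0:ℝ) < ε ^ ((1:ℝ)/α) := Real.rpow_pos_of_pos hε0 _
      have hεq : (0:ℝ) < ε ^ (1 - s) := Real.rpow_pos_of_pos hε0 _
      have hfle : f ε ≤ B * ε ^ ((1:ℝ)/α) := by
        rw [div_le_iff₀ hεp] at hb
        exact hb.2
      calc f ε / ε ^ (1 - s) ≤ B * ε ^ ((1:ℝ)/α) / ε ^ (1 - s) := by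
            exact div_le_div_of_nonneg_right hfle hεq.le
        _ = B * ε ^ (s - D) := by
            rw [mul_div_assoc, ← Real.rpow_sub hε0]
            congr 2
            rw [hD]; ring
  have hlb : ∀ s ∈ T, D ≤ s := by
    intro s hsT
    by_contra hcon
    push_neg at hcon
    obtain ⟨hs0, htend⟩ := hsT
    have hevA : ∀ᶠ ε in 𝓝[>] (0:ℝ), A ≤ f ε / ε ^ (1 - s) := by
      filter_upwards [hsmall, hbound] with ε hε hb
      obtain ⟨hε0, hε1⟩ := hε
      have hεp : (0:ℝ) < ε ^ ((1:ℝ)/α) := Real.rpow_pos_of_pos hε0 _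
      have hεq : (0:ℝ) < ε ^ (1 - s) := Real.rpow_pos_of_pos hε0 _
      have hfge : A * ε ^ ((1:ℝ)/α) ≤ f ε := by
        rw [le_div_iff₀ hεp] at hb
        exact hb.1
      have hpow1 : (1:ℝ) ≤ ε ^ (s - D) := by
        have := Real.rpow_le_rpow_of_exponent_ge hε0 hε1.le
          (by linarith : s - D ≤ (0:ℝ))
        rwa [Real.rpow_zero] at this
      calc A = A * 1 := by ring
        _ ≤ A * ε ^ (s - D) := mul_le_mul_of_nonneg_left hpow1 hA.le
        _ = A * ε ^ ((1:ℝ)/α) / ε ^ (1 - s) := by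
            rw [mul_div_assoc, ← Real.rpow_sub hε0]
            congr 2
            rw [hD]; ring
        _ ≤ f ε / ε ^ (1 - s) := div_le_div_of_nonneg_right hfge hεq.le
    have hevlt : ∀ᶠ ε in 𝓝[>] (0:ℝ), f ε / ε ^ (1 - s) < A :=
      htend.eventually (gt_mem_nhds hA)
    obtain ⟨ε, h1, h2⟩ := (hevA.and hevlt).exists
    linarith
  have hTne : T.Nonempty := ⟨D + 1, hmem _ (by linarith)⟩
  have hTbdd : BddBelow T := ⟨0, fun s hs => hs.1⟩
  refine le_antisymm ?_ (le_csInf hTne hlb)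
  refine le_of_forall_pos_le_add ?_
  intro δ hδ
  exact csInf_le hTbdd (hmem _ (by linarith))

/-- For `f(x) = x^α`, `α > 1`, and the orbit of `g = id − f` starting at `x₀ ∈ (0,1)`:
`|A_ε(S)| ≍ ε^{1/α}` as `ε → 0`, and the box dimension of `S` is `1 − 1/α`. -/
theorem power_orbit_box_dimension
    (α x₀ : ℝ) (hα : 1 < α) (hx₀ : x₀ ∈ Ioo (0:ℝ) 1)
    (x : ℕ → ℝ) (hx0 : x 0 = x₀)
    (hrec : ∀ n, x (n + 1) = x n - x n ^ α) :
    (∃ A B : ℝ, 0 < A ∧ A ≤ B ∧ ∀ᶠ ε in 𝓝[>] (0:ℝ),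
      A ≤ nbdLength (Set.range x) ε / ε ^ (1 / α) ∧
      nbdLength (Set.range x) ε / ε ^ (1 / α) ≤ B) ∧
    sInf {s : ℝ | 0 ≤ s ∧
        Tendsto (fun ε => nbdLength (Set.range x) ε / ε ^ (1 - s)) (𝓝[>] 0) (𝓝 0)}
      = 1 - 1 / α := by
  have hmem := orbit_mem hα hx₀ hx0 hrec
  have hanti := orbit_anti hα hx₀ hx0 hrec
  have hyge := orbit_y_ge hα hx₀ hx0 hrec
  have htend := orbit_tendsto hα hx₀ hx0 hrec
  have hts := nbd_two_sided hα hx₀ hx0 hrec hmem hanti hyge htend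
  obtain ⟨A, B, hA, hAB, hev⟩ := eventual_bounds hα hx₀ hts
  exact ⟨⟨A, B, hA, hAB, hev⟩,
    dim_eq hα (nbdLength (Set.range x)) (fun ε => ENNReal.toReal_nonneg) A B hA hev⟩
end

section
/- Let f : [0,d) → ℝ be continuous, C¹ on (0,d), positive on (0,d), with f(0) = 0, f'(0⁺) = 0 (i.e., lim_{x→0⁺} f'(x) = 0), and f(x) < x on (0,d). Let x_{n+1} = x_n − f(x_n) with x₀ ∈ (0,d). Then the sequence (x_n) is strictly decreasing, converges to 0, and lim_{n→∞} f(x_n)/f(x_{n-1}) = 1. -/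
open Set Filter Topology

/-- For `f` continuous on `[0,d)`, `C¹` and positive on `(0,d)`, with `f(0) = 0`,
`f'(0⁺) = 0` and `f(x) < x`, the orbit `x_{n+1} = x_n − f(x_n)` strictly decreases
to `0` and `f(x_{n+1})/f(x_n) → 1`. -/
theorem orbit_ratio_tendsto_one
    (d : ℝ) (hd : 0 < d) (f : ℝ → ℝ)
    (hfc : ContinuousOn f (Ico 0 d)) (hf : ContDiffOn ℝ 1 f (Ioo 0 d))
    (hfpos : ∀ x ∈ Ioo 0 d, 0 < f x) (hf0 : f 0 = 0)
    (hf'0 : Tendsto (deriv f) (𝓝[>] 0) (𝓝 0))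
    (hflt : ∀ x ∈ Ioo 0 d, f x < x)
    (x : ℕ → ℝ) (hx0 : x 0 ∈ Ioo 0 d)
    (hrec : ∀ n, x (n + 1) = x n - f (x n)) :
    StrictAnti x ∧ Tendsto x atTop (𝓝 0) ∧
    Tendsto (fun n => f (x (n + 1)) / f (x n)) atTop (𝓝 1) := by
  have hmem : ∀ n, x n ∈ Ioo 0 d := by
    intro n
    induction n with
    | zero => exact hx0
    | succ n ih =>
      rw [hrec]
      constructor
      · have := hflt _ ih; linarith
      · have := hfpos _ ih; linarith [ih.2]
  have hpos : ∀ n, 0 < x n := fun n => (hmem n).1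
  have hdec : ∀ n, x (n + 1) < x n := by
    intro n; rw [hrec]; linarith [hfpos _ (hmem n)]
  have hanti : StrictAnti x := strictAnti_nat_of_succ_lt hdec
  have hbdd : BddBelow (Set.range x) := ⟨0, fun y ⟨n, hn⟩ => hn ▸ (hpos n).le⟩
  have hdiff : DifferentiableOn ℝ f (Ioo 0 d) := hf.differentiableOn one_ne_zero
  have htend : Tendsto x atTop (𝓝 (⨅ n, x n)) :=
    tendsto_atTop_ciInf hanti.antitone hbdd
  set L := ⨅ n, x n with hL
  have hL0 : 0 ≤ L := le_ciInf fun n => (hpos n).le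
  have hLle : ∀ n, L ≤ x n := fun n => ciInf_le hbdd n
  have hLzero : L = 0 := by
    by_contra h
    have hLpos : 0 < L := lt_of_le_of_ne hL0 (Ne.symm h)
    have hLmem : L ∈ Ioo 0 d := ⟨hLpos, lt_of_le_of_lt (hLle 0) (hmem 0).2⟩
    have hca : ContinuousAt f L :=
      (hdiff.differentiableAt (isOpen_Ioo.mem_nhds hLmem)).continuousAt
    have h1 : Tendsto (fun n => x (n + 1)) atTop (𝓝 L) :=
      htend.comp (tendsto_add_atTop_nat 1)
    have h2 : Tendsto (fun n => x n - f (x n)) atTop (𝓝 (L - f L)) :=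
      htend.sub (hca.tendsto.comp htend)
    have h3 : Tendsto (fun n => x (n + 1)) atTop (𝓝 (L - f L)) := by
      simpa only [hrec] using h2
    have h4 := tendsto_nhds_unique h1 h3
    have h5 := hfpos L hLmem
    linarith
  rw [hLzero] at htend
  refine ⟨hanti, htend, ?_⟩
  -- mean value theorem on each step
  have hc : ∀ n, ∃ c ∈ Ioo (x (n + 1)) (x n),
      deriv f c = (f (x n) - f (x (n + 1))) / (x n - x (n + 1)) := by
    intro n
    refine exists_deriv_eq_slope f (hdec n) ?_ ?_
    · exact hfc.mono fun y hy =>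
        ⟨le_trans (hpos (n + 1)).le hy.1, lt_of_le_of_lt hy.2 (hmem n).2⟩
    · exact hdiff.mono fun y hy =>
        ⟨lt_trans (hpos (n + 1)) hy.1, lt_trans hy.2 (hmem n).2⟩
  choose c hcmem hcslope using hc
  have hratio : ∀ n, f (x (n + 1)) / f (x n) = 1 - deriv f (c n) := by
    intro n
    have hfn : f (x n) ≠ 0 := (hfpos _ (hmem n)).ne'
    have hgap : x n - x (n + 1) = f (x n) := by rw [hrec]; ring
    have := hcslope n
    rw [hgap] at this
    field_simp at this ⊢
    linarith
  have hc0 : Tendsto c atTop (𝓝 0) := by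
    refine tendsto_of_tendsto_of_tendsto_of_le_of_le tendsto_const_nhds htend
      (fun n => ?_) (fun n => (hcmem n).2.le)
    exact le_trans (hpos (n + 1)).le (hcmem n).1.le
  have hcw : Tendsto c atTop (𝓝[>] 0) :=
    tendsto_nhdsWithin_of_tendsto_nhds_of_eventually_within _ hc0
      (Eventually.of_forall fun n => lt_trans (hpos (n + 1)) (hcmem n).1)
  have hd0 : Tendsto (fun n => deriv f (c n)) atTop (𝓝 0) := hf'0.comp hcw
  have : Tendsto (fun n => 1 - deriv f (c n)) atTop (𝓝 (1 - 0)) :=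
    tendsto_const_nhds.sub hd0
  simpa [hratio] using this
end
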